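/- arXiv:2411.14960 — 2 statements merged into one kernel-verified Lean document; each statement's English description precedes it below -/
import Mathlib

section
/- Consider a tower of algebraic extensions 𝔽_p(t) ⊆ E ⊆ 𝐊 ⊆ 𝐋 where E/𝔽_p(t) is finite, 𝐊/E is infinite, and 𝐋 = 𝐊(β_1, …, β_s) for elements β_1, …, β_s ∈ 𝐋. Let α be algebraic over 𝐋 and let z ∈ 𝐋(α). Then there exist fields Ê and L with E ⊆ Ê ⊆ 𝐊, Ê/E finite, L = Ê(β_1, …, β_s) ⊆ 𝐋, such that: [Ê(β_j) : Ê] = [𝐊(β_j) : 𝐊] for all j = 1, …, s; α has the same monic irreducible polynomial over L as over 𝐋; z ∈ L(α); and N_{𝐋(α)/𝐋}(z) = N_{L(α)/L}(z). -/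
noncomputable section

/-- A normalized (surjective onto `ℤ`) discrete valuation on a field `K`, i.e. a
"prime" of a global function field. -/
structure FFPrime (K : Type) [Field K] where
  ord : K → WithTop ℤ
  ord_zero : ord 0 = ⊤
  ord_ne_top : ∀ x : K, x ≠ 0 → ord x ≠ ⊤
  ord_one : ord 1 = 0
  ord_mul : ∀ x y : K, ord (x * y) = ord x + ord y
  ord_add : ∀ x y : K, min (ord x) (ord y) ≤ ord (x + y)
  ord_surj : ∀ n : ℤ, ∃ x : K, ord x = (n : WithTop ℤ)

namespace FFPrime

variable {K L : Type} [Field K] [Field L]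

/-- `w` lies over `v` along `φ`, with ramification index `e`. -/
def LiesOverWith (w : FFPrime L) (v : FFPrime K) (φ : K →+* L) (e : ℕ) : Prop :=
  0 < e ∧ ∀ x : K, w.ord (φ x) = ((e : ℤ) : WithTop ℤ) * v.ord x

/-- `w` lies over `v` along `φ`. -/
def LiesOver (w : FFPrime L) (v : FFPrime K) (φ : K →+* L) : Prop :=
  ∃ e : ℕ, w.LiesOverWith v φ e

open Classical in
/-- The ramification index `e(w/v)`. -/
noncomputable def ramIdx (w : FFPrime L) (v : FFPrime K) (φ : K →+* L) : ℕ :=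
  if h : ∃ e : ℕ, w.LiesOverWith v φ e then h.choose else 0

/-- The residue field of `v` has exactly `n` elements. -/
def HasResidueCard (v : FFPrime K) (n : ℕ) : Prop :=
  ∃ s : Finset K, s.card = n ∧ (∀ x ∈ s, 0 ≤ v.ord x) ∧
    (∀ x ∈ s, ∀ y ∈ s, x ≠ y → ¬ 0 < v.ord (x - y)) ∧
    (∀ z : K, 0 ≤ v.ord z → ∃ x ∈ s, 0 < v.ord (z - x))

open Classical in
/-- The residue (relative) degree `f(w/v)`: the unique `f ≥ 1` with
`#κ_w = (#κ_v) ^ f` (residue fields of global function fields are finite). -/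
noncomputable def resDeg (w : FFPrime L) (v : FFPrime K) : ℕ :=
  if h : ∃ f : ℕ, 0 < f ∧ ∃ m n : ℕ, 1 < m ∧ v.HasResidueCard m ∧
      w.HasResidueCard n ∧ n = m ^ f then h.choose else 0

/-- `v` splits completely in the extension given by `φ`: every prime above it has
ramification index and residue degree `1`. -/
def SplitsCompletely (v : FFPrime K) (φ : K →+* L) : Prop :=
  ∀ w : FFPrime L, w.LiesOver v φ → w.ramIdx v φ = 1 ∧ w.resDeg v = 1

/-- `v` is inert in the finite extension `M/K`: there is a unique prime above it, with
ramification index `1` and residue degree `[M : K]`. -/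
def IsInert (v : FFPrime K) (M : Type) [Field M] [Algebra K M] : Prop :=
  (∃! w : FFPrime M, w.LiesOver v (algebraMap K M)) ∧
    ∀ w : FFPrime M, w.LiesOver v (algebraMap K M) →
      w.ramIdx v (algebraMap K M) = 1 ∧ w.resDeg v = Module.finrank K M

/-- `v` ramifies in the extension given by `φ`: some prime above it has ramification
index `> 1`. -/
def Ramifies (v : FFPrime K) (φ : K →+* L) : Prop :=
  ∃ w : FFPrime L, w.LiesOver v φ ∧ 2 ≤ w.ramIdx v φ

/-- `ord_v z ≡ 0 mod q`. -/
def OrdDvd (v : FFPrime K) (q : ℕ) (z : K) : Prop :=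
  ∃ n : ℤ, v.ord z = (((q : ℤ) * n : ℤ) : WithTop ℤ)

end FFPrime

/-- A nontrivial (rank one) valuation on a possibly infinite algebraic extension of a
global function field, with values in `ℚ ∪ {∞}`. -/
structure FFVal (B : Type) [Field B] where
  ord : B → WithTop ℚ
  ord_zero : ord 0 = ⊤
  ord_ne_top : ∀ x : B, x ≠ 0 → ord x ≠ ⊤
  ord_one : ord 1 = 0
  ord_mul : ∀ x y : B, ord (x * y) = ord x + ord y
  ord_add : ∀ x y : B, min (ord x) (ord y) ≤ ord (x + y)
  nontrivial : ∃ x : B, ord x ≠ 0 ∧ ord x ≠ ⊤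

/-- The valuation `V` of the big field restricts, up to a normalization factor `c`, to
the (normalized discrete) prime `v` of `K` along `φ`; i.e. `v` is the prime of `K`
lying below `V`. -/
def FFVal.RestrictsTo {K B : Type} [Field K] [Field B] (V : FFVal B) (v : FFPrime K)
    (φ : K →+* B) : Prop :=
  ∃ c : ℚ, 0 < c ∧
    ∀ x : K, V.ord (φ x) = ((c : ℚ) : WithTop ℚ) * WithTop.map (fun n : ℤ => (n : ℚ)) (v.ord x)

/-- The algebraic extension `B` of the rational function field `F0 = 𝔽_p(t)` is
`q`-bounded: for every valuation of `B`, the `q`-adic valuations of the ramification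
indices and residue degrees along every finite subextension are bounded. -/
def IsQBounded (q : ℕ) (F0 B : Type) [Field F0] [Field B] [Algebra F0 B] : Prop :=
  ∀ V : FFVal B, ∃ C : ℕ,
    ∀ L : IntermediateField F0 B, FiniteDimensional F0 L →
      ∀ v0 : FFPrime F0, ∀ vL : FFPrime L,
        V.RestrictsTo v0 (algebraMap F0 B) →
        V.RestrictsTo vL L.val.toRingHom →
        padicValNat q (vL.ramIdx v0 (algebraMap F0 L)) ≤ C ∧
        padicValNat q (vL.resDeg v0) ≤ C

/-- The prime `v` of `K` has uniformly `q`-bounded ramification in `B`. -/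
def UnifQBoundedRam (q : ℕ) {K : Type} [Field K] (B : Type) [Field B] [Algebra K B]
    (v : FFPrime K) : Prop :=
  ∃ C : ℕ, ∀ F : IntermediateField K B, FiniteDimensional K F →
    ∀ w : FFPrime F, w.LiesOver v (algebraMap K F) →
      padicValNat q (w.ramIdx v (algebraMap K F)) ≤ C

/-- The prime `v` of `K` has uniformly absolutely bounded ramification in `B`. -/
def UnifAbsBoundedRam {K : Type} [Field K] (B : Type) [Field B] [Algebra K B]
    (v : FFPrime K) : Prop :=
  ∃ C : ℕ, ∀ F : IntermediateField K B, FiniteDimensional K F →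
    ∀ w : FFPrime F, w.LiesOver v (algebraMap K F) →
      w.ramIdx v (algebraMap K F) ≤ C

/-- The prime `v` of `K` has uniformly `q`-bounded relative (residue) degree in `B`. -/
def UnifQBoundedRes (q : ℕ) {K : Type} [Field K] (B : Type) [Field B] [Algebra K B]
    (v : FFPrime K) : Prop :=
  ∃ C : ℕ, ∀ F : IntermediateField K B, FiniteDimensional K F →
    ∀ w : FFPrime F, w.LiesOver v (algebraMap K F) →
      padicValNat q (w.resDeg v) ≤ C

/-- The prime `v` of `K` is uniformly `q`-bounded in `B`. -/
def UniformlyQBoundedAt (q : ℕ) {K : Type} [Field K] (B : Type) [Field B] [Algebra K B]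
    (v : FFPrime K) : Prop :=
  UnifQBoundedRam q B v ∧ UnifQBoundedRes q B v

/-- The integral closure in `B` of the valuation ring `O_v = {x ∈ K : ord_v x ≥ 0}`. -/
def valIntegralClosure {K : Type} [Field K] (v : FFPrime K) (B : Type) [Field B]
    [Algebra K B] : Set B :=
  {x : B | ∃ P : Polynomial K, P.Monic ∧ (∀ n : ℕ, 0 ≤ v.ord (P.coeff n)) ∧
    Polynomial.aeval x P = 0}

/-- The integral closure in `B` of the ring `O_{K,S}` of `S`-integers of `K`. -/
def sIntegralClosure {K : Type} [Field K] (S : Set (FFPrime K)) (B : Type) [Field B]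
    [Algebra K B] : Set B :=
  {x : B | ∃ P : Polynomial K, P.Monic ∧
    (∀ n : ℕ, ∀ v : FFPrime K, v ∉ S → 0 ≤ v.ord (P.coeff n)) ∧
    Polynomial.aeval x P = 0}

/-- Elements of `B` that are units at every prime of `B` lying over a prime of `S`. -/
def unitsAtS {K : Type} [Field K] (S : Set (FFPrime K)) (B : Type) [Field B]
    [Algebra K B] : Set B :=
  {x : B | ∀ V : FFVal B, (∃ v ∈ S, V.RestrictsTo v (algebraMap K B)) → V.ord x = 0}

/-- Elements `x` of `B` with `ord (x - 1) > 0` at every prime of `B` lying over a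
prime of `S`. -/
def onesAtS {K : Type} [Field K] (S : Set (FFPrime K)) (B : Type) [Field B]
    [Algebra K B] : Set B :=
  {x : B | ∀ V : FFVal B, (∃ v ∈ S, V.RestrictsTo v (algebraMap K B)) → 0 < V.ord (x - 1)}

/-- A subset of a commutative ring is first-order definable in the language of rings
`{0, 1, +, ·}` with parameters from the ring. -/
def FODefinable {R : Type} [CommRing R] (X : Set R) : Prop :=
  letI : FirstOrder.Ring.CompatibleRing R := FirstOrder.Ring.compatibleRingOfRing R
  Set.Definable₁ (Set.univ : Set R) FirstOrder.Language.ring X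

/-- A subset of a commutative ring is existentially (diophantine) definable: it is cut
out by a block of existential quantifiers followed by a system of polynomial equations,
with parameters (coefficients) from the ring. -/
def ExistDefinable {R : Type} [CommRing R] (X : Set R) : Prop :=
  ∃ (k m : ℕ) (P : Fin m → MvPolynomial (Fin (k + 1)) R),
    ∀ x : R, x ∈ X ↔ ∃ y : Fin k → R, ∀ i : Fin m,
      MvPolynomial.eval (Fin.cons x y) (P i) = 0

/-- Solvability of the norm equation `N(y) = b·x^q + b^q` over (every realization of)
the tower `L₂(a^{1/q})/L₂`, where `L₁ = F((1+(b x^q+b^q)⁻¹)^{1/q})` and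
`L₂ = L₁((1+(a+a⁻¹)b⁻¹)^{1/q})`. -/
def NormTower2Solvable (q : ℕ) (F : Type) [Field F] (a b x : F) : Prop :=
  ∀ (M1 : Type) [Field M1] [Algebra F M1] (α1 : M1),
    α1 ^ q = algebraMap F M1 (1 + (b * x ^ q + b ^ q)⁻¹) →
    IntermediateField.adjoin F {α1} = ⊤ →
    ∀ (M2 : Type) [Field M2] [Algebra M1 M2] (α2 : M2),
      α2 ^ q = algebraMap M1 M2 (algebraMap F M1 (1 + (a + a⁻¹) * b⁻¹)) →
      IntermediateField.adjoin M1 {α2} = ⊤ →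
      ∀ (M3 : Type) [Field M3] [Algebra M2 M3] (α3 : M3),
        α3 ^ q = algebraMap M2 M3 (algebraMap M1 M2 (algebraMap F M1 a)) →
        IntermediateField.adjoin M2 {α3} = ⊤ →
        ∃ y : M3, Algebra.norm M2 y = algebraMap M1 M2 (algebraMap F M1 (b * x ^ q + b ^ q))

/-- Solvability of the norm equation `N(y) = b·x^q + b^q` over (every realization of)
the tower `L₄(a^{1/q})/L₄`, where `L₁ = F((1+(b x^q+b^q)⁻¹)^{1/q})`,
`L₃ = L₁((1+x⁻¹)^{1/q})` and `L₄ = L₃((1+(a+a⁻¹)x⁻¹)^{1/q})`. -/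
def NormTower4Solvable (q : ℕ) (F : Type) [Field F] (a b x : F) : Prop :=
  ∀ (M1 : Type) [Field M1] [Algebra F M1] (α1 : M1),
    α1 ^ q = algebraMap F M1 (1 + (b * x ^ q + b ^ q)⁻¹) →
    IntermediateField.adjoin F {α1} = ⊤ →
    ∀ (M3 : Type) [Field M3] [Algebra M1 M3] (α3 : M3),
      α3 ^ q = algebraMap M1 M3 (algebraMap F M1 (1 + x⁻¹)) →
      IntermediateField.adjoin M1 {α3} = ⊤ →
      ∀ (M4 : Type) [Field M4] [Algebra M3 M4] (α4 : M4),
        α4 ^ q = algebraMap M3 M4 (algebraMap M1 M3 (algebraMap F M1 (1 + (a + a⁻¹) * x⁻¹))) →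
        IntermediateField.adjoin M3 {α4} = ⊤ →
        ∀ (M5 : Type) [Field M5] [Algebra M4 M5] (α5 : M5),
          α5 ^ q = algebraMap M4 M5 (algebraMap M3 M4 (algebraMap M1 M3 (algebraMap F M1 a))) →
          IntermediateField.adjoin M4 {α5} = ⊤ →
          ∃ y : M5, Algebra.norm M4 y =
            algebraMap M3 M4 (algebraMap M1 M3 (algebraMap F M1 (b * x ^ q + b ^ q)))

/-- Unsolvability of the norm equation `N(y) = b·x^q + b^q` over (every realization of)
the tower `L₄(a^{1/q})/L₄` as in `NormTower4Solvable`. -/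
def NormTower4Unsolvable (q : ℕ) (F : Type) [Field F] (a b x : F) : Prop :=
  ∀ (M1 : Type) [Field M1] [Algebra F M1] (α1 : M1),
    α1 ^ q = algebraMap F M1 (1 + (b * x ^ q + b ^ q)⁻¹) →
    IntermediateField.adjoin F {α1} = ⊤ →
    ∀ (M3 : Type) [Field M3] [Algebra M1 M3] (α3 : M3),
      α3 ^ q = algebraMap M1 M3 (algebraMap F M1 (1 + x⁻¹)) →
      IntermediateField.adjoin M1 {α3} = ⊤ →
      ∀ (M4 : Type) [Field M4] [Algebra M3 M4] (α4 : M4),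
        α4 ^ q = algebraMap M3 M4 (algebraMap M1 M3 (algebraMap F M1 (1 + (a + a⁻¹) * x⁻¹))) →
        IntermediateField.adjoin M3 {α4} = ⊤ →
        ∀ (M5 : Type) [Field M5] [Algebra M4 M5] (α5 : M5),
          α5 ^ q = algebraMap M4 M5 (algebraMap M3 M4 (algebraMap M1 M3 (algebraMap F M1 a))) →
          IntermediateField.adjoin M4 {α5} = ⊤ →
          ¬ ∃ y : M5, Algebra.norm M4 y =
            algebraMap M3 M4 (algebraMap M1 M3 (algebraMap F M1 (b * x ^ q + b ^ q)))


section Statement14Aux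

open Polynomial IntermediateField Module

section NormPow
variable (K L : Type*) [Field K] [Field L] [Algebra K L]

/-- `Algebra.norm_eq_norm_adjoin` without separability. -/
theorem my_norm_eq_norm_adjoin [FiniteDimensional K L] (x : L) :
    Algebra.norm K x = Algebra.norm K (AdjoinSimple.gen K x) ^ finrank ↥K⟮x⟯ L := by
  classical
  have hx : IsIntegral K x := IsIntegral.of_finite K x
  haveI : FiniteDimensional ↥K⟮x⟯ L := FiniteDimensional.right K ↥K⟮x⟯ L
  let pbx := IntermediateField.adjoin.powerBasis hx
  let c := Module.finBasis ↥K⟮x⟯ L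
  have key : Algebra.norm K (algebraMap ↥K⟮x⟯ L (AdjoinSimple.gen K x)) =
      Algebra.norm K (AdjoinSimple.gen K x) ^ finrank ↥K⟮x⟯ L := by
    erw [Algebra.norm_eq_matrix_det (pbx.basis.smulTower c) _,
      Algebra.smulTower_leftMulMatrix_algebraMap, Matrix.det_blockDiagonal,
      Algebra.norm_eq_matrix_det pbx.basis]
    simp only [Finset.prod_const, Finset.card_univ, Fintype.card_fin]
  conv_lhs => rw [← AdjoinSimple.algebraMap_gen K x]
  exact key

end NormPow

section Formula
variable {N : Type} [Field N]

set_option synthInstance.maxHeartbeats 1000000 in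
/-- Norm of an element of `F(α)` in terms of its minimal polynomial. -/
theorem my_norm_formula (F : Type) [Field F] [Algebra F N] (α : N) (hα : IsIntegral F α)
    (z : N) (hz : z ∈ adjoin F {α}) :
    algebraMap F N (Algebra.norm F (⟨z, hz⟩ : ↥(adjoin F {α}))) =
      ((-1 : N) ^ (minpoly F z).natDegree * algebraMap F N ((minpoly F z).coeff 0)) ^
        ((minpoly F α).natDegree / (minpoly F z).natDegree) := by
  haveI : FiniteDimensional F ↥(adjoin F {α}) := adjoin.finiteDimensional hα
  set M := adjoin F {α}
  set w : ↥M := ⟨z, hz⟩ with hw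
  have hwi : IsIntegral F w := IsIntegral.of_finite F w
  have hminz : minpoly F z = minpoly F w := by
    have : z = algebraMap ↥M N w := rfl
    rw [this, minpoly.algebraMap_eq (algebraMap ↥M N).injective]
  have h1 : finrank F ↥F⟮w⟯ = (minpoly F w).natDegree := adjoin.finrank hwi
  have h2 : finrank F ↥M = (minpoly F α).natDegree := by
    rw [← adjoin.finrank hα]
  have h3 : finrank F ↥F⟮w⟯ * finrank ↥F⟮w⟯ ↥M = finrank F ↥M :=
    Module.finrank_mul_finrank F ↥F⟮w⟯ ↥M
  have hdpos : 0 < (minpoly F w).natDegree := minpoly.natDegree_pos hwi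
  have hfr : finrank ↥F⟮w⟯ ↥M = (minpoly F α).natDegree / (minpoly F w).natDegree := by
    rw [← h2, ← h3, ← h1, Nat.mul_div_cancel_left _ (h1 ▸ hdpos)]
  have hnorm : Algebra.norm F w = Algebra.norm F (AdjoinSimple.gen F w) ^ finrank ↥F⟮w⟯ ↥M :=
    my_norm_eq_norm_adjoin F ↥M w
  have hgen : Algebra.norm F (AdjoinSimple.gen F w) =
      (-1 : F) ^ (minpoly F w).natDegree * (minpoly F w).coeff 0 := by
    have := Algebra.PowerBasis.norm_gen_eq_coeff_zero_minpoly (adjoin.powerBasis hwi)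
    rwa [adjoin.powerBasis_gen, adjoin.powerBasis_dim, minpoly_gen] at this
  rw [hnorm, hgen, hfr, hminz]
  push_cast [map_pow, map_mul, map_neg, map_one]
  ring

end Formula

section Lift
variable {E N : Type} [Field E] [Field N] [Algebra E N]

theorem my_polyLift (L' : IntermediateField E N) (Q : Polynomial N)
    (hQ : ∀ i, Q.coeff i ∈ L') :
    ∃ P : Polynomial ↥L', P.map (algebraMap ↥L' N) = Q := by
  refine ⟨∑ i ∈ Finset.range (Q.natDegree + 1),
    Polynomial.C (⟨Q.coeff i, hQ i⟩ : ↥L') * Polynomial.X ^ i, ?_⟩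
  conv_rhs => rw [Q.as_sum_range' (Q.natDegree + 1) (lt_add_one _)]
  rw [Polynomial.map_sum]
  simp [Polynomial.map_mul, Polynomial.map_pow, Polynomial.C_mul_X_pow_eq_monomial]

theorem my_minpoly_map_eq {L' B' : IntermediateField E N} (h : L' ≤ B') (x : N)
    (hx : IsIntegral ↥B' x)
    (hc : ∀ i, ((minpoly ↥B' x).coeff i : N) ∈ L') :
    IsIntegral ↥L' x ∧
    (minpoly ↥L' x).map (algebraMap ↥L' N) = (minpoly ↥B' x).map (algebraMap ↥B' N) := by
  obtain ⟨P, hP⟩ := my_polyLift L' ((minpoly ↥B' x).map (algebraMap ↥B' N)) (by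
    intro i; rw [Polynomial.coeff_map]; exact hc i)
  have hmonicB : (minpoly ↥B' x).Monic := minpoly.monic hx
  have hPmonic : P.Monic := by
    have : (P.map (algebraMap ↥L' N)).Monic := hP ▸ hmonicB.map _
    exact Polynomial.monic_of_injective (algebraMap ↥L' N).injective this
  have haev : Polynomial.aeval x P = 0 := by
    rw [Polynomial.aeval_def, ← Polynomial.eval_map, hP, Polynomial.eval_map,
      ← Polynomial.aeval_def]
    exact minpoly.aeval _ _
  have hxL : IsIntegral ↥L' x := ⟨P, hPmonic, haev⟩
  letI : Algebra ↥L' ↥B' := (IntermediateField.inclusion h).toAlgebra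
  haveI : IsScalarTower ↥L' ↥B' N := IsScalarTower.of_algebraMap_eq (fun y => rfl)
  have hdvd1 : minpoly ↥B' x ∣ (minpoly ↥L' x).map (algebraMap ↥L' ↥B') :=
    minpoly.dvd_map_of_isScalarTower ↥L' ↥B' x
  have hdvd1' : (minpoly ↥B' x).map (algebraMap ↥B' N) ∣
      (minpoly ↥L' x).map (algebraMap ↥L' N) := by
    have := Polynomial.map_dvd (algebraMap ↥B' N) hdvd1
    rwa [Polynomial.map_map, ← IsScalarTower.algebraMap_eq] at this
  have hdvd2 : (minpoly ↥L' x).map (algebraMap ↥L' N) ∣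
      (minpoly ↥B' x).map (algebraMap ↥B' N) := by
    have h0 : minpoly ↥L' x ∣ P := minpoly.dvd _ _ haev
    have := Polynomial.map_dvd (algebraMap ↥L' N) h0
    rwa [hP] at this
  exact ⟨hxL, Polynomial.eq_of_monic_of_associated ((minpoly.monic hxL).map _)
    (hmonicB.map _) (associated_of_dvd_dvd hdvd2 hdvd1')⟩

end Lift

end Statement14Aux

/-- Given a tower `𝔽_p(t) ⊆ E ⊆ 𝐊 ⊆ 𝐋` with `E/𝔽_p(t)` finite,
`𝐊/E` infinite and `𝐋 = 𝐊(β₁, …, β_s)`, an element `α` algebraic over `𝐋` and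
`z ∈ 𝐋(α)`, there are a finite extension `Ê` of `E` inside `𝐊` and
`L = Ê(β₁, …, β_s) ⊆ 𝐋` such that `[Ê(β_j) : Ê] = [𝐊(β_j) : 𝐊]` for all `j`, `α` has
the same monic irreducible polynomial over `L` as over `𝐋`, `z ∈ L(α)`, and
`N_{𝐋(α)/𝐋}(z) = N_{L(α)/L}(z)`. -/
theorem statement14 (p : ℕ) [Fact p.Prime]
    (E : Type) [Field E] [Algebra (RatFunc (ZMod p)) E]
    [FiniteDimensional (RatFunc (ZMod p)) E]
    (N : Type) [Field N] [Algebra E N] [Algebra.IsAlgebraic E N]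
    (BK BL : IntermediateField E N) (hKL : BK ≤ BL)
    (hinf : ¬ FiniteDimensional E ↥BK)
    (s : ℕ) (β : Fin s → N) (hβ : ∀ j, β j ∈ BL)
    (hgen : BL = IntermediateField.restrictScalars E
      (IntermediateField.adjoin (↥BK) (Set.range β)))
    (α : N) (hα : IsAlgebraic (↥BL) α)
    (z : N) (hz : z ∈ IntermediateField.adjoin (↥BL) {α}) :
    ∃ Ehat L : IntermediateField E N,
      Ehat ≤ BK ∧ FiniteDimensional E ↥Ehat ∧ L ≤ BL ∧
      L = IntermediateField.restrictScalars E
        (IntermediateField.adjoin (↥Ehat) (Set.range β)) ∧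
      (∀ j, Module.finrank (↥Ehat) (IntermediateField.adjoin (↥Ehat) {β j}) =
        Module.finrank (↥BK) (IntermediateField.adjoin (↥BK) {β j})) ∧
      (minpoly (↥L) α).map (algebraMap (↥L) N) =
        (minpoly (↥BL) α).map (algebraMap (↥BL) N) ∧
      ∃ hzL : z ∈ IntermediateField.adjoin (↥L) {α},
        algebraMap (↥BL) N (Algebra.norm (↥BL)
          (⟨z, hz⟩ : ↥(IntermediateField.adjoin (↥BL) {α}))) =
        algebraMap (↥L) N (Algebra.norm (↥L)
          (⟨z, hzL⟩ : ↥(IntermediateField.adjoin (↥L) {α}))) := by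
    classical
  have hBL' : BL = IntermediateField.adjoin E ((BK : Set N) ∪ Set.range β) := by
    rw [hgen, IntermediateField.restrictScalars_adjoin]
  have hint : ∀ x : N, IsIntegral E x := fun x => (Algebra.IsAlgebraic.isAlgebraic x).isIntegral
  have hαint : IsIntegral ↥BL α := hα.isIntegral
  have hzint : IsIntegral ↥BL z := by
    haveI : FiniteDimensional ↥BL ↥(IntermediateField.adjoin ↥BL {α}) :=
      IntermediateField.adjoin.finiteDimensional hαint
    have h1 : IsIntegral ↥BL (⟨z, hz⟩ : ↥(IntermediateField.adjoin ↥BL {α})) :=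
      IsIntegral.of_finite _ _
    exact h1.map (IntermediateField.adjoin ↥BL {α}).val
  -- z as a polynomial in α over BL
  have hz' : z ∈ Algebra.adjoin ↥BL {α} := by
    have h2 := IntermediateField.adjoin_simple_toSubalgebra_of_isAlgebraic hαint.isAlgebraic
    rw [← h2]
    exact hz
  obtain ⟨p, hp⟩ : ∃ p : Polynomial ↥BL, Polynomial.aeval α p = z := by
    rwa [Algebra.adjoin_singleton_eq_range_aeval, AlgHom.mem_range] at hz'
  -- capturing finitely many elements of BL
  have key : ∀ w : N, w ∈ BL → ∃ T : Finset N, (T : Set N) ⊆ (BK : Set N) ∧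
      w ∈ IntermediateField.adjoin E ((T : Set N) ∪ Set.range β) := by
    intro w hw
    rw [hBL'] at hw
    obtain ⟨T', hT'sub, hT'mem⟩ := IntermediateField.exists_finset_of_mem_adjoin hw
    refine ⟨T'.filter (· ∈ BK), ?_, ?_⟩
    · intro y hy
      simp only [Finset.coe_filter, Set.mem_setOf_eq] at hy
      exact hy.2
    · refine IntermediateField.adjoin.mono E _ _ ?_ hT'mem
      intro y hy
      rcases hT'sub hy with h1 | h1
      · refine Or.inl ?_
        simp only [Finset.coe_filter, Set.mem_setOf_eq]
        exact ⟨Finset.mem_coe.mp hy, h1⟩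
      · exact Or.inr h1
  have key2 : ∀ (m : ℕ) (c : Fin m → ↥BL), ∃ T : Finset N, (T : Set N) ⊆ (BK : Set N) ∧
      ∀ i, (c i : N) ∈ IntermediateField.adjoin E ((T : Set N) ∪ Set.range β) := by
    intro m c
    choose T hT1 hT2 using fun i : Fin m => key (c i) (c i).2
    refine ⟨Finset.univ.biUnion T, ?_, fun i => ?_⟩
    · intro y hy
      rw [Finset.mem_coe, Finset.mem_biUnion] at hy
      obtain ⟨i, -, hi⟩ := hy
      exact hT1 i (Finset.mem_coe.mpr hi)
    · refine IntermediateField.adjoin.mono E _ _ ?_ (hT2 i)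
      apply Set.union_subset_union_left
      intro y hy
      rw [Finset.mem_coe, Finset.mem_biUnion]
      exact ⟨i, Finset.mem_univ i, Finset.mem_coe.mp hy⟩
  set P := minpoly ↥BL α with hPdef
  set Q := minpoly ↥BL z with hQdef
  obtain ⟨T1, hT1K, hT1mem⟩ := key2 (P.natDegree + 1) (fun i => P.coeff i)
  obtain ⟨T2, hT2K, hT2mem⟩ := key2 (Q.natDegree + 1) (fun i => Q.coeff i)
  obtain ⟨T3, hT3K, hT3mem⟩ := key2 (p.natDegree + 1) (fun i => p.coeff i)
  set Tβ : Finset N := Finset.univ.biUnion (fun j : Fin s =>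
    (Finset.range ((minpoly ↥BK (β j)).natDegree + 1)).image
      (fun i => ((minpoly ↥BK (β j)).coeff i : N))) with hTβdef
  have hTβK : (Tβ : Set N) ⊆ (BK : Set N) := by
    intro y hy
    rw [Finset.mem_coe, hTβdef, Finset.mem_biUnion] at hy
    obtain ⟨j, -, hy⟩ := hy
    rw [Finset.mem_image] at hy
    obtain ⟨i, -, rfl⟩ := hy
    exact ((minpoly ↥BK (β j)).coeff i).2
  set T : Finset N := ((T1 ∪ T2) ∪ T3) ∪ Tβ with hTdef
  have hTK : (T : Set N) ⊆ (BK : Set N) := by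
    intro y hy
    rw [Finset.mem_coe, hTdef] at hy
    simp only [Finset.mem_union] at hy
    rcases hy with ((h | h) | h) | h
    · exact hT1K h
    · exact hT2K h
    · exact hT3K h
    · exact hTβK h
  set Ehat : IntermediateField E N := IntermediateField.adjoin E (T : Set N) with hEhatdef
  have hEhatK : Ehat ≤ BK := IntermediateField.adjoin_le_iff.mpr hTK
  haveI hEhatfd : FiniteDimensional E ↥Ehat :=
    IntermediateField.finiteDimensional_adjoin (fun x _ => hint x)
  set L : IntermediateField E N := IntermediateField.restrictScalars E
    (IntermediateField.adjoin ↥Ehat (Set.range β)) with hLdef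
  have hL : L = IntermediateField.adjoin E ((Ehat : Set N) ∪ Set.range β) := by
    rw [hLdef, IntermediateField.restrictScalars_adjoin]
  have hLBL : L ≤ BL := by
    rw [hL, hBL']
    refine IntermediateField.adjoin.mono E _ _ ?_
    refine Set.union_subset_union_left _ ?_
    intro y hy
    exact SetLike.mem_coe.mpr (hEhatK hy)
  have hTsubL : IntermediateField.adjoin E ((T : Set N) ∪ Set.range β) ≤ L := by
    rw [hL]
    refine IntermediateField.adjoin.mono E _ _ ?_
    refine Set.union_subset_union_left _ ?_
    exact IntermediateField.subset_adjoin E _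
  -- subsets of T
  have hsub1 : (T1 : Set N) ⊆ (T : Set N) := by
    intro y hy; rw [Finset.mem_coe, hTdef]; simp only [Finset.mem_union]
    exact Or.inl (Or.inl (Or.inl hy))
  have hsub2 : (T2 : Set N) ⊆ (T : Set N) := by
    intro y hy; rw [Finset.mem_coe, hTdef]; simp only [Finset.mem_union]
    exact Or.inl (Or.inl (Or.inr hy))
  have hsub3 : (T3 : Set N) ⊆ (T : Set N) := by
    intro y hy; rw [Finset.mem_coe, hTdef]; simp only [Finset.mem_union]
    exact Or.inl (Or.inr hy)
  have hsubβ : (Tβ : Set N) ⊆ (T : Set N) := by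
    intro y hy; rw [Finset.mem_coe, hTdef]; simp only [Finset.mem_union]
    exact Or.inr hy
  have hmemL : ∀ (d : ℕ) (c : Fin d → ↥BL) (T' : Finset N),
      (T' : Set N) ⊆ (T : Set N) →
      (∀ i, (c i : N) ∈ IntermediateField.adjoin E ((T' : Set N) ∪ Set.range β)) →
      ∀ i, (c i : N) ∈ L := by
    intro d c T' hT' hmem i
    refine hTsubL (IntermediateField.adjoin.mono E _ _ ?_ (hmem i))
    exact Set.union_subset_union_left _ hT'
  have hPc : ∀ i, (P.coeff i : N) ∈ L := by
    intro i
    by_cases hi : i ≤ P.natDegree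
    · exact hmemL (P.natDegree + 1) (fun i => P.coeff i) T1 hsub1 hT1mem
        ⟨i, Nat.lt_succ_of_le hi⟩
    · have h0 : P.coeff i = 0 := Polynomial.coeff_eq_zero_of_natDegree_lt (lt_of_not_ge hi)
      rw [h0]
      exact L.zero_mem
  have hQc : ∀ i, (Q.coeff i : N) ∈ L := by
    intro i
    by_cases hi : i ≤ Q.natDegree
    · exact hmemL (Q.natDegree + 1) (fun i => Q.coeff i) T2 hsub2 hT2mem
        ⟨i, Nat.lt_succ_of_le hi⟩
    · have h0 : Q.coeff i = 0 := Polynomial.coeff_eq_zero_of_natDegree_lt (lt_of_not_ge hi)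
      rw [h0]
      exact L.zero_mem
  have hpc : ∀ i, (p.coeff i : N) ∈ L := by
    intro i
    by_cases hi : i ≤ p.natDegree
    · exact hmemL (p.natDegree + 1) (fun i => p.coeff i) T3 hsub3 hT3mem
        ⟨i, Nat.lt_succ_of_le hi⟩
    · have h0 : p.coeff i = 0 := Polynomial.coeff_eq_zero_of_natDegree_lt (lt_of_not_ge hi)
      rw [h0]
      exact L.zero_mem
  have hRc : ∀ (j : Fin s) (i : ℕ), ((minpoly ↥BK (β j)).coeff i : N) ∈ Ehat := by
    intro j i
    by_cases hi : i ≤ (minpoly ↥BK (β j)).natDegree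
    · refine IntermediateField.subset_adjoin E _ (hsubβ ?_)
      rw [Finset.mem_coe, hTβdef, Finset.mem_biUnion]
      exact ⟨j, Finset.mem_univ j, Finset.mem_image.mpr
        ⟨i, Finset.mem_range.mpr (Nat.lt_succ_of_le hi), rfl⟩⟩
    · have h0 : (minpoly ↥BK (β j)).coeff i = 0 :=
        Polynomial.coeff_eq_zero_of_natDegree_lt (lt_of_not_ge hi)
      rw [h0]
      exact Ehat.zero_mem
  obtain ⟨hαL, hPmap⟩ := my_minpoly_map_eq hLBL α hαint hPc
  obtain ⟨hzLi, hQmap⟩ := my_minpoly_map_eq hLBL z hzint hQc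
  have hβKint : ∀ j, IsIntegral ↥BK (β j) := fun j => (hint (β j)).tower_top
  have hβmm := fun j => my_minpoly_map_eq hEhatK (β j) (hβKint j) (hRc j)
  have hfin : ∀ j, Module.finrank ↥Ehat (IntermediateField.adjoin ↥Ehat {β j}) =
      Module.finrank ↥BK (IntermediateField.adjoin ↥BK {β j}) := by
    intro j
    obtain ⟨hβE, hmap⟩ := hβmm j
    rw [IntermediateField.adjoin.finrank hβE, IntermediateField.adjoin.finrank (hβKint j)]
    have h1 := congrArg Polynomial.natDegree hmap
    rwa [Polynomial.natDegree_map_eq_of_injective (algebraMap ↥Ehat N).injective,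
      Polynomial.natDegree_map_eq_of_injective (algebraMap ↥BK N).injective] at h1
  -- z ∈ L(α)
  obtain ⟨p', hp'⟩ := my_polyLift L (p.map (algebraMap ↥BL N)) (by
    intro i; rw [Polynomial.coeff_map]; exact hpc i)
  have hzval : Polynomial.aeval α p' = z := by
    rw [Polynomial.aeval_def, ← Polynomial.eval_map, hp', Polynomial.eval_map,
      ← Polynomial.aeval_def, hp]
  have hzL : z ∈ IntermediateField.adjoin ↥L {α} := by
    rw [← hzval]
    have hmem : Polynomial.aeval α p' ∈ Algebra.adjoin ↥L {α} := by
      rw [Algebra.adjoin_singleton_eq_range_aeval]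
      exact ⟨p', rfl⟩
    exact IntermediateField.algebra_adjoin_le_adjoin ↥L {α} hmem
  refine ⟨Ehat, L, hEhatK, hEhatfd, hLBL, rfl, hfin, hPmap, hzL, ?_⟩
  have hnormBL := my_norm_formula ↥BL α hαint z hz
  have hnormL := my_norm_formula ↥L α hαL z hzL
  rw [hnormBL, hnormL]
  have e1 : (minpoly ↥L z).natDegree = (minpoly ↥BL z).natDegree := by
    have h1 := congrArg Polynomial.natDegree hQmap
    rwa [Polynomial.natDegree_map_eq_of_injective (algebraMap ↥L N).injective,
      Polynomial.natDegree_map_eq_of_injective (algebraMap ↥BL N).injective] at h1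
  have e2 : algebraMap ↥L N ((minpoly ↥L z).coeff 0) =
      algebraMap ↥BL N ((minpoly ↥BL z).coeff 0) := by
    have h1 := congrArg (fun q => Polynomial.coeff q 0) hQmap
    simpa only [Polynomial.coeff_map] using h1
  have e3 : (minpoly ↥L α).natDegree = (minpoly ↥BL α).natDegree := by
    have h1 := congrArg Polynomial.natDegree hPmap
    rwa [Polynomial.natDegree_map_eq_of_injective (algebraMap ↥L N).injective,
      Polynomial.natDegree_map_eq_of_injective (algebraMap ↥BL N).injective] at h1
  rw [e1, e2, e3]
end
end

section
/- Let K be a global function field of characteristic p containing a primitive q-th root of unity, where q ≠ p is prime, and let 𝔭_K be a prime of K. Let a, b, x ∈ K^× satisfy: (1) ord_{𝔭_K} b < 0 and ord_{𝔭_K} b ≢ 0 mod q; (2) a is a unit at 𝔭_K and the residue of a is not a q-th power in the residue field of 𝔭_K; (3) ord_{𝔭_K} x < ((q−1)/q)·ord_{𝔭_K} b. Define L_1 = K((1+(bx^q+b^q)^{-1})^{1/q}), L_3 = L_1((1+x^{-1})^{1/q}), and L_4 = L_3((1+(a+a^{-1})x^{-1})^{1/q}) (under the hypotheses all elements inverted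 here are nonzero). Then there is no y ∈ L_4(a^{1/q}) with N_{L_4(a^{1/q})/L_4}(y) = b x^q + b^q. -/
noncomputable section

namespace FFPrime
variable {K : Type} [Field K] (w : FFPrime K)

lemma ord_exists_int {x : K} (hx : x ≠ 0) : ∃ n : ℤ, w.ord x = (n : WithTop ℤ) := by
  rcases WithTop.ne_top_iff_exists.mp (w.ord_ne_top x hx) with ⟨n, hn⟩
  exact ⟨n, hn.symm⟩

lemma ord_ne_zero_of_ord {x : K} {n : ℤ} (h : w.ord x = (n : WithTop ℤ)) : x ≠ 0 := by
  intro rfl'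
  rw [rfl', w.ord_zero] at h
  exact (WithTop.top_ne_coe h)

lemma ord_neg_one : w.ord (-1 : K) = 0 := by
  have h := w.ord_mul (-1) (-1)
  rw [neg_one_mul, neg_neg, w.ord_one] at h
  rcases w.ord_exists_int (x := (-1:K)) (by norm_num) with ⟨n, hn⟩
  rw [hn, ← WithTop.coe_add] at h
  have h2 : (0:ℤ) = n + n := by exact_mod_cast h
  have h3 : n = 0 := by omega
  rw [hn, h3]; rfl

lemma ord_neg (x : K) : w.ord (-x) = w.ord x := by
  have h := w.ord_mul (-1) x
  rw [neg_one_mul, w.ord_neg_one, zero_add] at h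
  exact h

lemma ord_pow_coe {x : K} {n : ℤ} (h : w.ord x = (n : WithTop ℤ)) (k : ℕ) :
    w.ord (x ^ k) = ((k * n : ℤ) : WithTop ℤ) := by
  induction k with
  | zero => simpa using w.ord_one
  | succ k ih =>
      rw [pow_succ, w.ord_mul, ih, h, ← WithTop.coe_add]
      congr 1
      push_cast
      ring

lemma ord_inv {x : K} {n : ℤ} (h : w.ord x = (n : WithTop ℤ)) :
    w.ord x⁻¹ = ((-n : ℤ) : WithTop ℤ) := by
  have hx : x ≠ 0 := w.ord_ne_zero_of_ord h
  have h2 := w.ord_mul x x⁻¹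
  rw [mul_inv_cancel₀ hx, w.ord_one, h] at h2
  rcases w.ord_exists_int (x := x⁻¹) (inv_ne_zero hx) with ⟨m, hm⟩
  rw [hm, ← WithTop.coe_add] at h2
  have : n + m = 0 := by exact_mod_cast h2.symm
  rw [hm]; congr 1; omega

lemma ord_add_left {x y : K} (h : w.ord x < w.ord y) : w.ord (x + y) = w.ord x := by
  refine le_antisymm ?_ ?_
  · by_contra hlt
    push_neg at hlt
    have h2 : w.ord x = w.ord ((x + y) + (-y)) := by ring_nf
    have h3 := w.ord_add (x + y) (-y)
    rw [w.ord_neg] at h3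
    have : min (w.ord (x+y)) (w.ord y) > w.ord x := lt_min hlt h
    exact absurd (h2 ▸ h3) (by exact not_le_of_gt (h2 ▸ this))
  · have h3 := w.ord_add x y
    rwa [min_eq_left h.le] at h3

lemma ord_pow_nonneg {x : K} (h : 0 ≤ w.ord x) (k : ℕ) : 0 ≤ w.ord (x ^ k) := by
  induction k with
  | zero => simp [w.ord_one]
  | succ k ih => rw [pow_succ, w.ord_mul]; exact add_nonneg ih h

lemma ord_pow_zero {x : K} (h : w.ord x = 0) (k : ℕ) : w.ord (x ^ k) = 0 := by
  induction k with
  | zero => simp [w.ord_one]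
  | succ k ih => rw [pow_succ, w.ord_mul, ih, h, add_zero]

lemma ord_sum {ι : Type*} (s : Finset ι) (f : ι → K) (B : WithTop ℤ)
    (h : ∀ i ∈ s, B ≤ w.ord (f i)) : B ≤ w.ord (∑ i ∈ s, f i) := by
  classical
  induction s using Finset.induction with
  | empty => simp [w.ord_zero]
  | @insert a s' hne ih =>
      rw [Finset.sum_insert hne]
      refine le_trans (le_min (h a (by simp)) (ih fun i hi => h i (by simp [hi]))) ?_
      exact w.ord_add _ _

lemma ord_eq_zero_of_pow_eq_one {x : K} {k : ℕ} (hk : k ≠ 0) (h : x ^ k = 1) :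
    w.ord x = 0 := by
  have hx : x ≠ 0 := by
    intro rfl'; rw [rfl', zero_pow hk] at h; exact one_ne_zero h.symm
  rcases w.ord_exists_int hx with ⟨n, hn⟩
  have := w.ord_pow_coe hn k
  rw [h, w.ord_one] at this
  have h0 : (k : ℤ) * n = 0 := by exact_mod_cast this.symm
  have : n = 0 := by
    rcases mul_eq_zero.mp h0 with h' | h'
    · exact absurd (by exact_mod_cast h') hk
    · exact h'
  rw [hn, this]; rfl

lemma ord_sub_one_pos {x : K} (h : 0 < w.ord (x - 1)) : w.ord x = 0 := by
  have : x = 1 + (x - 1) := by ring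
  rw [this, w.ord_add_left (by rw [w.ord_one]; exact h), w.ord_one]

/-- Pull back a prime along a ring isomorphism. -/
def pullback {A B : Type} [Field A] [Field B] (w : FFPrime B) (e : A ≃+* B) : FFPrime A where
  ord x := w.ord (e x)
  ord_zero := by show w.ord (e 0) = ⊤; rw [map_zero, w.ord_zero]
  ord_ne_top x hx := w.ord_ne_top _ (by simp [hx])
  ord_one := by show w.ord (e 1) = 0; rw [map_one, w.ord_one]
  ord_mul x y := by show w.ord (e (x*y)) = w.ord (e x) + w.ord (e y); rw [map_mul, w.ord_mul]
  ord_add x y := by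
    show min (w.ord (e x)) (w.ord (e y)) ≤ w.ord (e (x + y))
    rw [map_add]; exact w.ord_add _ _
  ord_surj n := by
    rcases w.ord_surj n with ⟨x, hx⟩
    exact ⟨e.symm x, by simpa using hx⟩

end FFPrime

section Helpers
variable {K : Type} [Field K] (w : FFPrime K)

/-- A common integer lower bound for finitely many `WithTop ℤ` values. -/
lemma exists_int_lb {ι : Type*} (s : Finset ι) (f : ι → WithTop ℤ) :
    ∃ b : ℤ, ∀ i ∈ s, (b : WithTop ℤ) ≤ f i := by
  classical
  induction s using Finset.induction with
  | empty => exact ⟨0, by simp⟩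
  | @insert a s' hne ih =>
      rcases ih with ⟨b, hb⟩
      by_cases h : f a = ⊤
      · exact ⟨b, by intro i hi; rcases Finset.mem_insert.mp hi with rfl | hi
                     · rw [h]; exact le_top
                     · exact hb i hi⟩
      · rcases WithTop.ne_top_iff_exists.mp h with ⟨m, hm⟩
        refine ⟨min b m, ?_⟩
        intro i hi
        rcases Finset.mem_insert.mp hi with rfl | hi
        · rw [← hm]; exact_mod_cast WithTop.coe_le_coe.mpr (min_le_right b m)
        · exact le_trans (by exact_mod_cast WithTop.coe_le_coe.mpr (min_le_left b m)) (hb i hi)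

open Polynomial in
/-- A common integer lower bound for the coefficients of a polynomial. -/
lemma coeff_bound (P : K[X]) : ∃ b : ℤ, ∀ i : ℕ, (b : WithTop ℤ) ≤ w.ord (P.coeff i) := by
  rcases exists_int_lb (Finset.range (P.natDegree + 1)) (fun i => w.ord (P.coeff i)) with ⟨b, hb⟩
  refine ⟨b, fun i => ?_⟩
  by_cases hi : i < P.natDegree + 1
  · exact hb i (Finset.mem_range.mpr hi)
  · rw [P.coeff_eq_zero_of_natDegree_lt (by omega), w.ord_zero]; exact le_top

open Polynomial in
lemma ord_eval_ge {P : K[X]} {b : ℤ} (hb : ∀ i : ℕ, (b : WithTop ℤ) ≤ w.ord (P.coeff i))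
    {x : K} (hx : 0 ≤ w.ord x) : (b : WithTop ℤ) ≤ w.ord (P.eval x) := by
  rw [Polynomial.eval_eq_sum_range]
  refine w.ord_sum _ _ _ (fun i _ => ?_)
  rw [w.ord_mul]
  calc (b : WithTop ℤ) = b + 0 := by rw [add_zero]
  _ ≤ w.ord (P.coeff i) + w.ord (x ^ i) := add_le_add (hb i) (w.ord_pow_nonneg hx i)

open Polynomial in
lemma ord_eval_sub_ge {P : K[X]} {b : ℤ} (hb : ∀ i : ℕ, (b : WithTop ℤ) ≤ w.ord (P.coeff i))
    {x y : K} (hx : 0 ≤ w.ord x) (hy : 0 ≤ w.ord y) :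
    (b : WithTop ℤ) + w.ord (x - y) ≤ w.ord (P.eval x - P.eval y) := by
  have hxy : ∀ i : ℕ, w.ord (x - y) ≤ w.ord (x ^ i - y ^ i) := by
    intro i
    have hg := geom_sum₂_mul x y i
    have : w.ord (x ^ i - y ^ i) = w.ord (∑ j ∈ Finset.range i, x ^ j * y ^ (i - 1 - j)) + w.ord (x - y) := by
      rw [← hg, w.ord_mul]
    rw [this]
    calc w.ord (x - y) = 0 + w.ord (x - y) := by rw [zero_add]
    _ ≤ _ := add_le_add (w.ord_sum _ _ _ (fun j _ => by
          rw [w.ord_mul]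
          exact add_nonneg (w.ord_pow_nonneg hx j) (w.ord_pow_nonneg hy _))) le_rfl
  have : P.eval x - P.eval y = ∑ i ∈ Finset.range (P.natDegree + 1), P.coeff i * (x ^ i - y ^ i) := by
    rw [Polynomial.eval_eq_sum_range, Polynomial.eval_eq_sum_range, ← Finset.sum_sub_distrib]
    congr 1; ext i; ring
  rw [this]
  refine w.ord_sum _ _ _ (fun i _ => ?_)
  rw [w.ord_mul]
  exact add_le_add (hb i) (hxy i)

end Helpers

open Polynomial in
lemma degree_lt_coe_iff_natDegree_lt {R : Type*} [Semiring R] {f : R[X]} {n : ℕ} (hn : 0 < n) :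
    f.degree < (n : WithBot ℕ) ↔ f.natDegree < n := by
  by_cases h0 : f = 0
  · subst h0
    simp only [Polynomial.degree_zero, Polynomial.natDegree_zero]
    exact ⟨fun _ => hn, fun _ => WithBot.bot_lt_coe n⟩
  · rw [Polynomial.degree_eq_natDegree h0, Nat.cast_lt]

open Polynomial in
lemma coeff_monomial_sum {R : Type*} [Semiring R] (n : ℕ) (b : ℕ → R) (j : ℕ) :
    (∑ i ∈ Finset.range n, monomial i (b i)).coeff j = if j < n then b j else 0 := by
  rw [Polynomial.finset_sum_coeff]
  simp only [Polynomial.coeff_monomial]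
  by_cases hj : j < n
  · rw [if_pos hj, Finset.sum_eq_single j (fun i _ hij => if_neg hij) (fun h => absurd (Finset.mem_range.mpr hj) h), if_pos rfl]
  · rw [if_neg hj]
    refine Finset.sum_eq_zero (fun i hi => ?_)
    refine if_neg (fun h => hj ?_)
    subst h
    exact Finset.mem_range.mp hi

open Polynomial in
lemma degree_monomial_sum_lt {R : Type*} [Semiring R] {n : ℕ} (hn : 0 < n) (b : ℕ → R) :
    (∑ i ∈ Finset.range n, monomial i (b i)).degree < (n : WithBot ℕ) := by
  rw [Polynomial.degree_lt_iff_coeff_zero]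
  intro m hm
  rw [coeff_monomial_sum]
  rw [if_neg (by exact_mod_cast not_lt.mpr (by exact_mod_cast hm))]

section RepMachinery

open Polynomial AdjoinRoot

variable {M : Type} [Field M] {q : ℕ} (hq : q.Prime) {u : M}
  (H : Irreducible (X ^ q - C u))

/-- Representative polynomial of degree `< q` for elements of `AdjoinRoot (X^q - C u)`. -/
noncomputable def rep (z : AdjoinRoot (X ^ q - C u)) : M[X] :=
  AdjoinRoot.modByMonicHom (monic_X_pow_sub_C u hq.ne_zero) z

variable {z : AdjoinRoot (X ^ q - C u)}

lemma mk_rep (hq : q.Prime) (z : AdjoinRoot (X ^ q - C u)) : AdjoinRoot.mk _ (rep hq z) = z :=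
  AdjoinRoot.mk_leftInverse (monic_X_pow_sub_C u hq.ne_zero) z

lemma rep_degree_lt (hq : q.Prime) (z : AdjoinRoot (X ^ q - C u)) :
    (rep hq z).degree < (q : WithBot ℕ) := by
  rcases AdjoinRoot.mk_surjective (g := X ^ q - C u) z with ⟨f, rfl⟩
  have h := Polynomial.degree_modByMonic_lt f (monic_X_pow_sub_C u hq.ne_zero)
  rw [degree_X_pow_sub_C hq.pos] at h
  exact (by rw [rep, AdjoinRoot.modByMonicHom_mk]; exact h)

lemma rep_natDegree_lt (hq : q.Prime) (z : AdjoinRoot (X ^ q - C u)) :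
    (rep hq z).natDegree < q :=
  (degree_lt_coe_iff_natDegree_lt hq.pos).mp (rep_degree_lt hq z)

lemma rep_eq_of_degree_lt (hq : q.Prime) (f : M[X]) (hf : f.degree < (q : WithBot ℕ)) :
    rep hq (AdjoinRoot.mk (X ^ q - C u) f) = f := by
  rw [rep, AdjoinRoot.modByMonicHom_mk]
  exact (Polynomial.modByMonic_eq_self_iff (monic_X_pow_sub_C u hq.ne_zero)).mpr
    (by rw [degree_X_pow_sub_C hq.pos]; exact hf)

lemma rep_zero (hq : q.Prime) : rep hq (0 : AdjoinRoot (X ^ q - C u)) = 0 := by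
  rw [rep]; exact map_zero _

lemma rep_eq_zero_iff (hq : q.Prime) (z : AdjoinRoot (X ^ q - C u)) :
    rep hq z = 0 ↔ z = 0 := by
  constructor
  · intro h; rw [← mk_rep hq z, h, map_zero]
  · intro h; rw [h, rep_zero]

lemma rep_add (hq : q.Prime) (z z' : AdjoinRoot (X ^ q - C u)) :
    rep hq (z + z') = rep hq z + rep hq z' := by
  rw [rep, rep, rep]; exact map_add _ _ _

lemma rep_sub (hq : q.Prime) (z z' : AdjoinRoot (X ^ q - C u)) :
    rep hq (z - z') = rep hq z - rep hq z' := by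
  rw [rep, rep, rep]; exact map_sub _ _ _

lemma rep_algebraMap (hq : q.Prime) (c : M) :
    rep hq (algebraMap M (AdjoinRoot (X ^ q - C u)) c) = C c := by
  have h1 : algebraMap M (AdjoinRoot (X ^ q - C u)) c = AdjoinRoot.mk _ (C c) := by
    rw [AdjoinRoot.algebraMap_eq]; rfl
  rw [h1, rep_eq_of_degree_lt hq]
  exact lt_of_le_of_lt (degree_C_le) (by exact_mod_cast hq.pos)

lemma rep_one (hq : q.Prime) : rep hq (1 : AdjoinRoot (X ^ q - C u)) = 1 := by
  have := rep_algebraMap (u := u) hq 1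
  rwa [map_one, map_one] at this

lemma rep_mul_sub_dvd (hq : q.Prime) (z z' : AdjoinRoot (X ^ q - C u)) :
    ∃ S : M[X], rep hq z * rep hq z' - rep hq (z * z') = (X ^ q - C u) * S := by
  have h : AdjoinRoot.mk (X ^ q - C u) (rep hq z * rep hq z' - rep hq (z * z')) = 0 := by
    rw [map_sub, map_mul, mk_rep, mk_rep, mk_rep, sub_self]
  exact AdjoinRoot.mk_eq_zero.mp h

end RepMachinery

section StepACore
open Polynomial AdjoinRoot

variable {M : Type} [Field M] {q : ℕ} {u : M}

lemma stepA_core [hHF : Fact (Irreducible (X ^ q - C u))] (w : FFPrime M) (hq : q.Prime)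
    (t₀ : ℤ) (ht₀ : 1 ≤ t₀) (r : ℕ → M)
    (hr0 : ∀ n, w.ord (r n) = 0)
    (hre : ∀ n : ℕ, ((t₀ + n : ℤ) : WithTop ℤ) ≤ w.ord (r n ^ q - u))
    (hrc : ∀ n m : ℕ, n ≤ m → ((t₀ + n : ℤ) : WithTop ℤ) ≤ w.ord (r m - r n)) :
    ∃ wA : FFPrime (AdjoinRoot (X ^ q - C u)),
      (∀ c : M, wA.ord (algebraMap M (AdjoinRoot (X ^ q - C u)) c) = w.ord c) ∧
      (∀ z : AdjoinRoot (X ^ q - C u), ∀ N : ℤ,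
        ∃ c : M, (N : WithTop ℤ) < wA.ord (z - algebraMap M (AdjoinRoot (X ^ q - C u)) c)) := by
  have H : Irreducible (X ^ q - C u) := hHF.out
  have hr0' : ∀ n, 0 ≤ w.ord (r n) := fun n => by rw [hr0 n]
  -- the approximating valuations eventually stabilize
  have key : ∀ z : AdjoinRoot (X ^ q - C u), ∃ V : WithTop ℤ, (z ≠ 0 → V ≠ ⊤) ∧
      ∃ m0 : ℕ, ∀ n, m0 ≤ n → w.ord ((rep hq z).eval (r n)) = V := by
    intro z
    by_cases hz : z = 0
    · refine ⟨⊤, fun h => absurd hz h, 0, fun n _ => ?_⟩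
      rw [hz, rep_zero, Polynomial.eval_zero, w.ord_zero]
    · have hf0 : rep hq z ≠ 0 := fun h => hz ((rep_eq_zero_iff hq z).mp h)
      have hfd : (rep hq z).degree < ((q : ℕ) : WithBot ℕ) := rep_degree_lt hq z
      have hgf : ¬ (X ^ q - C u) ∣ rep hq z := by
        intro hdvd
        have := Polynomial.degree_le_of_dvd hdvd hf0
        rw [degree_X_pow_sub_C hq.pos] at this
        exact absurd hfd (not_lt.mpr this)
      have hcop : IsCoprime (X ^ q - C u) (rep hq z) := (H.coprime_iff_not_dvd).mpr hgf
      obtain ⟨P, Q, hPQ⟩ := hcop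
      have hQ0 : Q ≠ 0 := by
        intro h
        rw [h, zero_mul, add_zero] at hPQ
        exact H.not_isUnit (IsUnit.of_mul_eq_one _ ((mul_comm _ _).trans hPQ))
      obtain ⟨bP, hbP⟩ := coeff_bound w P
      obtain ⟨bQ, hbQ⟩ := coeff_bound w Q
      obtain ⟨bf, hbf⟩ := coeff_bound w (rep hq z)
      -- a uniform upper bound on the approximating valuations
      have hub : ∀ n : ℕ, 1 ≤ bP + t₀ + n →
          w.ord ((rep hq z).eval (r n)) ≤ ((-bQ : ℤ) : WithTop ℤ) := by
        intro n hn
        by_contra hlt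
        push_neg at hlt
        have heval : P.eval (r n) * (r n ^ q - u) + Q.eval (r n) * (rep hq z).eval (r n) = 1 := by
          have h := congrArg (Polynomial.eval (r n)) hPQ
          simpa using h
        have h1 : (0 : WithTop ℤ) < w.ord (P.eval (r n) * (r n ^ q - u)) := by
          rw [w.ord_mul]
          calc (0 : WithTop ℤ) < ((bP + (t₀ + n) : ℤ) : WithTop ℤ) := by
                exact_mod_cast (by omega : (0:ℤ) < bP + (t₀ + n))
          _ = ((bP : ℤ) : WithTop ℤ) + ((t₀ + n : ℤ) : WithTop ℤ) := by
                rw [← WithTop.coe_add]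
          _ ≤ _ := add_le_add (ord_eval_ge w hbP (hr0' n)) (hre n)
        have h2 : (0 : WithTop ℤ) < w.ord (Q.eval (r n) * (rep hq z).eval (r n)) := by
          rw [w.ord_mul]
          calc (0 : WithTop ℤ) = ((bQ : ℤ) : WithTop ℤ) + ((-bQ : ℤ) : WithTop ℤ) := by
                rw [← WithTop.coe_add]; norm_num
          _ < _ := WithTop.add_lt_add_of_le_of_lt (WithTop.coe_ne_top)
                (ord_eval_ge w hbQ (hr0' n)) hlt
        have h3 := w.ord_add (P.eval (r n) * (r n ^ q - u)) (Q.eval (r n) * (rep hq z).eval (r n))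
        rw [heval, w.ord_one] at h3
        exact absurd h3 (not_le_of_gt (lt_min h1 h2))
      set n0 := (max (1 - bP - t₀) (-bQ - bf - t₀ + 1)).toNat with hn0def
      have hA : (1 - bP - t₀ : ℤ) ≤ (n0 : ℤ) := le_trans (le_max_left _ _) (Int.self_le_toNat _)
      have hB : (-bQ - bf - t₀ + 1 : ℤ) ≤ (n0 : ℤ) := le_trans (le_max_right _ _) (Int.self_le_toNat _)
      have hWn0 : w.ord ((rep hq z).eval (r n0)) ≤ ((-bQ : ℤ) : WithTop ℤ) := hub n0 (by omega)
      refine ⟨w.ord ((rep hq z).eval (r n0)),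
        fun _ => ne_top_of_le_ne_top WithTop.coe_ne_top hWn0, n0, ?_⟩
      intro n hn
      have hdiff : ((bf + (t₀ + n0) : ℤ) : WithTop ℤ) ≤
          w.ord ((rep hq z).eval (r n) - (rep hq z).eval (r n0)) := by
        calc ((bf + (t₀ + n0) : ℤ) : WithTop ℤ)
            = ((bf : ℤ) : WithTop ℤ) + ((t₀ + n0 : ℤ) : WithTop ℤ) := by rw [← WithTop.coe_add]
        _ ≤ ((bf : ℤ) : WithTop ℤ) + w.ord (r n - r n0) := add_le_add le_rfl (hrc n0 n hn)
        _ ≤ _ := ord_eval_sub_ge w hbf (hr0' n) (hr0' n0)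
      have hlt2 : w.ord ((rep hq z).eval (r n0)) <
          w.ord ((rep hq z).eval (r n) - (rep hq z).eval (r n0)) :=
        lt_of_le_of_lt hWn0
          (lt_of_lt_of_le (WithTop.coe_lt_coe.mpr (by omega : (-bQ:ℤ) < bf + (t₀ + n0))) hdiff)
      have heq2 : (rep hq z).eval (r n) =
          (rep hq z).eval (r n0) + ((rep hq z).eval (r n) - (rep hq z).eval (r n0)) := by ring
      rw [heq2, w.ord_add_left hlt2]
  choose V hVtop m0 hV using key
  have huniq : ∀ (z : AdjoinRoot (X ^ q - C u)) (Vz : WithTop ℤ),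
      (∃ k0 : ℕ, ∀ n, k0 ≤ n → w.ord ((rep hq z).eval (r n)) = Vz) → V z = Vz := by
    rintro z Vz ⟨k0, hk0⟩
    rw [← hV z (max (m0 z) k0) (le_max_left _ _), hk0 _ (le_max_right _ _)]
  have hValg : ∀ c : M, V (algebraMap M (AdjoinRoot (X ^ q - C u)) c) = w.ord c := by
    intro c
    refine huniq _ _ ⟨0, fun n _ => ?_⟩
    rw [rep_algebraMap, Polynomial.eval_C]
  have hV0 : V 0 = ⊤ := huniq 0 ⊤ ⟨0, fun n _ => by rw [rep_zero, Polynomial.eval_zero, w.ord_zero]⟩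
  have hVone : V 1 = 0 := by
    refine huniq 1 0 ⟨0, fun n _ => ?_⟩
    rw [rep_one, Polynomial.eval_one, w.ord_one]
  have hVmul : ∀ z z', V (z * z') = V z + V z' := by
    intro z z'
    by_cases hz : z = 0
    · rw [hz, zero_mul, hV0, top_add]
    by_cases hz' : z' = 0
    · rw [hz', mul_zero, hV0, add_top]
    obtain ⟨S, hS⟩ := rep_mul_sub_dvd hq z z'
    have heval : ∀ n, (rep hq (z*z')).eval (r n) =
        (rep hq z).eval (r n) * (rep hq z').eval (r n) + -((r n ^ q - u) * S.eval (r n)) := by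
      intro n
      have h := congrArg (Polynomial.eval (r n)) hS
      simp only [Polynomial.eval_sub, Polynomial.eval_mul, Polynomial.eval_pow,
        Polynomial.eval_X, Polynomial.eval_C] at h
      linear_combination -h
    obtain ⟨vz, hvz⟩ := WithTop.ne_top_iff_exists.mp (hVtop z hz)
    obtain ⟨vz', hvz'⟩ := WithTop.ne_top_iff_exists.mp (hVtop z' hz')
    obtain ⟨bS, hbS⟩ := coeff_bound w S
    set n1 := max (max (m0 z) (m0 z')) (max (m0 (z*z')) ((vz + vz' - bS - t₀ + 1).toNat)) with hn1
    have hb1 : (vz + vz' - bS - t₀ + 1 : ℤ) ≤ (n1 : ℤ) := by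
      have h1 : ((vz + vz' - bS - t₀ + 1).toNat : ℤ) ≤ (n1 : ℤ) := by
        exact_mod_cast Nat.cast_le.mpr (le_trans (le_max_right _ _) (le_max_right _ _))
      exact le_trans (Int.self_le_toNat _) h1
    have hWz : w.ord ((rep hq z).eval (r n1)) = (vz : WithTop ℤ) := by
      rw [hV z n1 (le_trans (le_max_left _ _) (le_max_left _ _)), hvz]
    have hWz' : w.ord ((rep hq z').eval (r n1)) = (vz' : WithTop ℤ) := by
      rw [hV z' n1 (le_trans (le_max_right _ _) (le_max_left _ _)), hvz']
    have hprod : w.ord ((rep hq z).eval (r n1) * (rep hq z').eval (r n1))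
        = ((vz + vz' : ℤ) : WithTop ℤ) := by
      rw [w.ord_mul, hWz, hWz', ← WithTop.coe_add]
    have herr : ((bS + (t₀ + n1) : ℤ) : WithTop ℤ) ≤
        w.ord (-((r n1 ^ q - u) * S.eval (r n1))) := by
      rw [w.ord_neg, w.ord_mul]
      calc ((bS + (t₀ + n1) : ℤ) : WithTop ℤ)
          = ((t₀ + n1 : ℤ) : WithTop ℤ) + ((bS : ℤ) : WithTop ℤ) := by
            rw [← WithTop.coe_add]; congr 1; ring
      _ ≤ _ := add_le_add (hre n1) (ord_eval_ge w hbS (hr0' n1))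
    have hVzz' : V (z * z') = ((vz + vz' : ℤ) : WithTop ℤ) := by
      rw [← hV (z*z') n1 (le_trans (le_max_left _ _) (le_max_right _ _)), heval n1,
        w.ord_add_left (x := (rep hq z).eval (r n1) * (rep hq z').eval (r n1))]
      · exact hprod
      · rw [hprod]
        exact lt_of_lt_of_le (WithTop.coe_lt_coe.mpr (by omega : vz + vz' < bS + (t₀ + n1))) herr
    rw [hVzz', ← hvz, ← hvz', ← WithTop.coe_add]
  have hVadd : ∀ z z', min (V z) (V z') ≤ V (z + z') := by
    intro z z'
    set n1 := max (max (m0 z) (m0 z')) (m0 (z + z'))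
    rw [← hV z n1 (le_trans (le_max_left _ _) (le_max_left _ _)),
        ← hV z' n1 (le_trans (le_max_right _ _) (le_max_left _ _)),
        ← hV (z + z') n1 (le_max_right _ _), rep_add, Polynomial.eval_add]
    exact w.ord_add _ _
  refine ⟨⟨V, hV0, fun z hz => hVtop z hz, hVone, hVmul, hVadd, ?_⟩, hValg, ?_⟩
  · intro k
    obtain ⟨x, hx⟩ := w.ord_surj k
    exact ⟨algebraMap M _ x, by rw [hValg, hx]⟩
  · -- density
    intro z N
    obtain ⟨bf, hbf⟩ := coeff_bound w (rep hq z)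
    set n := (N - bf - t₀ + 1).toNat with hndef
    have hnN : (N - bf - t₀ + 1 : ℤ) ≤ (n : ℤ) := Int.self_le_toNat _
    refine ⟨(rep hq z).eval (r n), ?_⟩
    set z' := z - algebraMap M (AdjoinRoot (X ^ q - C u)) ((rep hq z).eval (r n)) with hz'
    have hrepd : rep hq z' = rep hq z - C ((rep hq z).eval (r n)) := by
      rw [hz', rep_sub, rep_algebraMap]
    show (N : WithTop ℤ) < V z'
    rw [← hV z' (max n (m0 z')) (le_max_right _ _), hrepd, Polynomial.eval_sub,
      Polynomial.eval_C]
    have hge := ord_eval_sub_ge w hbf (hr0' (max n (m0 z'))) (hr0' n)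
    have hc := hrc n (max n (m0 z')) (le_max_left _ _)
    calc (N : WithTop ℤ) < ((bf + (t₀ + n) : ℤ) : WithTop ℤ) := WithTop.coe_lt_coe.mpr (by omega)
    _ = ((bf : ℤ) : WithTop ℤ) + ((t₀ + n : ℤ) : WithTop ℤ) := by rw [← WithTop.coe_add]
    _ ≤ ((bf : ℤ) : WithTop ℤ) + w.ord (r (max n (m0 z')) - r n) := add_le_add le_rfl hc
    _ ≤ _ := hge

end StepACore

section Newton
open Polynomial

variable {K : Type} [Field K]

lemma FFPrime.ord_pow_ge (w : FFPrime K) {x : K} {B : ℤ} (hB : 0 ≤ B)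
    (h : (B : WithTop ℤ) ≤ w.ord x) (j : ℕ) :
    ((j * B : ℤ) : WithTop ℤ) ≤ w.ord (x ^ j) := by
  induction j with
  | zero => simp [w.ord_one]
  | succ j ih =>
      rw [pow_succ, w.ord_mul]
      calc (((j+1 : ℕ) * B : ℤ) : WithTop ℤ) = ((j * B : ℤ) : WithTop ℤ) + (B : WithTop ℤ) := by
            rw [← WithTop.coe_add]; congr 1; push_cast; ring
      _ ≤ _ := add_le_add ih h

/-- Newton approximation: a sequence of approximate `q`-th roots of `u` when `u ≡ 1`. -/
lemma newton_exists (w : FFPrime K) {q : ℕ} (hq : q.Prime)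
    (hnat : ∀ m : ℕ, 0 ≤ w.ord (m : K)) (hqM : w.ord (q : K) = 0)
    {u : K} {t₀ : ℤ} (ht₀ : w.ord (u - 1) = (t₀ : WithTop ℤ)) (ht₀pos : 1 ≤ t₀) :
    ∃ r : ℕ → K, (∀ n, w.ord (r n) = 0) ∧
      (∀ n : ℕ, ((t₀ + n : ℤ) : WithTop ℤ) ≤ w.ord (r n ^ q - u)) ∧
      (∀ n m : ℕ, n ≤ m → ((t₀ + n : ℤ) : WithTop ℤ) ≤ w.ord (r m - r n)) := by
  have hqM0 : (q : K) ≠ 0 := by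
    intro h; rw [h, w.ord_zero] at hqM; exact WithTop.top_ne_coe hqM
  obtain ⟨m2, hm2⟩ : ∃ m2, q = m2 + 2 := ⟨q - 2, by have := hq.two_le; omega⟩
  set r : ℕ → K := fun n => Nat.rec (1 : K) (fun _ s => s - (s ^ q - u) / ((q : K) * s ^ (q - 1))) n
    with hrdef
  have hrsucc : ∀ n, r (n + 1) = r n - (r n ^ q - u) / ((q : K) * r n ^ (q - 1)) := fun n => rfl
  have hinv : ∀ n : ℕ, 0 < w.ord (r n - 1) ∧ ((t₀ + n : ℤ) : WithTop ℤ) ≤ w.ord (r n ^ q - u) := by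
    intro n
    induction n with
    | zero =>
        constructor
        · show 0 < w.ord ((1:K) - 1)
          rw [sub_self, w.ord_zero]
          exact WithTop.coe_lt_top 0
        · show ((t₀ + (0:ℕ) : ℤ) : WithTop ℤ) ≤ w.ord ((1:K) ^ q - u)
          rw [one_pow]
          have : (1:K) - u = -(u - 1) := by ring
          rw [this, w.ord_neg, ht₀]
          exact WithTop.coe_le_coe.mpr (by omega)
    | succ n ih =>
        obtain ⟨hs1, hsq⟩ := ih
        have hs0 : w.ord (r n) = 0 := w.ord_sub_one_pos hs1
        have hsne : r n ≠ 0 := w.ord_ne_zero_of_ord (n := 0) (by exact_mod_cast hs0)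
        have hden : (q : K) * r n ^ (q - 1) ≠ 0 := mul_ne_zero hqM0 (pow_ne_zero _ hsne)
        set d := (r n ^ q - u) / ((q : K) * r n ^ (q - 1)) with hddef
        have hdmul : d * ((q : K) * r n ^ (q - 1)) = r n ^ q - u := div_mul_cancel₀ _ hden
        have hdenord : w.ord ((q : K) * r n ^ (q - 1)) = 0 := by
          rw [w.ord_mul, hqM, w.ord_pow_zero hs0, add_zero]
        have hdord : w.ord d = w.ord (r n ^ q - u) := by
          have h := w.ord_mul d ((q : K) * r n ^ (q - 1))
          rw [hdmul, hdenord, add_zero] at h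
          exact h.symm
        have hdge : ((t₀ + n : ℤ) : WithTop ℤ) ≤ w.ord d := hdord ▸ hsq
        have hdpos : (0 : WithTop ℤ) < w.ord d :=
          lt_of_lt_of_le (by exact_mod_cast (by omega : (0:ℤ) < t₀ + n)) hdge
        constructor
        · have heq : r (n+1) - 1 = (r n - 1) + -d := by rw [hrsucc]; ring
          rw [heq]
          refine lt_of_lt_of_le (lt_min hs1 (by rw [w.ord_neg]; exact hdpos)) (w.ord_add _ _)
        · -- binomial expansion
          have hkey : r (n+1) ^ q - u =
              ∑ k ∈ Finset.range (m2 + 1), r n ^ k * (-d) ^ (q - k) * ((q.choose k : ℕ) : K) := by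
            have h1 : r (n+1) ^ q = ∑ k ∈ Finset.range (q + 1),
                r n ^ k * (-d) ^ (q - k) * ((q.choose k : ℕ) : K) := by
              rw [hrsucc, ← hddef, sub_eq_add_neg, add_pow]
            have h2 : ∑ k ∈ Finset.range (q + 1), r n ^ k * (-d) ^ (q - k) * ((q.choose k : ℕ) : K)
                = (∑ k ∈ Finset.range (m2 + 1), r n ^ k * (-d) ^ (q - k) * ((q.choose k : ℕ) : K))
                  + r n ^ (m2+1) * (-d) ^ (q - (m2+1)) * ((q.choose (m2+1) : ℕ) : K)
                  + r n ^ (m2+2) * (-d) ^ (q - (m2+2)) * ((q.choose (m2+2) : ℕ) : K) := by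
              have : q + 1 = (m2 + 2) + 1 := by omega
              rw [this, Finset.sum_range_succ, Finset.sum_range_succ]
            have h3 : r n ^ (m2+2) * (-d) ^ (q - (m2+2)) * ((q.choose (m2+2) : ℕ) : K)
                = r n ^ q := by
              rw [hm2]
              simp [Nat.choose_self]
            have h4 : r n ^ (m2+1) * (-d) ^ (q - (m2+1)) * ((q.choose (m2+1) : ℕ) : K)
                = -(r n ^ q - u) := by
              have hc : q.choose (m2+1) = m2 + 2 := by
                rw [hm2]; exact Nat.choose_succ_self_right (m2+1)
              have he : q - (m2+1) = 1 := by omega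
              have he2 : q - 1 = m2 + 1 := by omega
              rw [hc, he, pow_one]
              rw [he2] at hdmul
              push_cast at hdmul ⊢
              rw [hm2] at hdmul ⊢
              push_cast at hdmul ⊢
              linear_combination -hdmul
            rw [h1, h2, h3, h4]
            ring
          rw [hkey]
          refine w.ord_sum _ _ _ (fun k hk => ?_)
          have hk' : k ≤ m2 := Nat.lt_succ_iff.mp (Finset.mem_range.mp hk)
          have hj2 : 2 ≤ q - k := by omega
          rw [w.ord_mul, w.ord_mul, w.ord_pow_zero hs0, zero_add]
          have h6 : (((q - k : ℕ) * (t₀ + n) : ℤ) : WithTop ℤ) ≤ w.ord ((-d) ^ (q - k)) :=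
            w.ord_pow_ge (by omega) (by rw [w.ord_neg]; exact hdge) (q - k)
          calc ((t₀ + (n+1 : ℕ) : ℤ) : WithTop ℤ)
              ≤ (((q - k : ℕ) * (t₀ + n) : ℤ) : WithTop ℤ) := by
                apply WithTop.coe_le_coe.mpr
                have h7 : (2:ℤ) ≤ ((q - k : ℕ) : ℤ) := by exact_mod_cast hj2
                have h8 : (0:ℤ) ≤ t₀ + n := by omega
                push_cast
                nlinarith
          _ = (((q - k : ℕ) * (t₀ + n) : ℤ) : WithTop ℤ) + 0 := (add_zero _).symm
          _ ≤ _ := add_le_add h6 (hnat (q.choose k))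
  have hstep : ∀ n : ℕ, ((t₀ + n : ℤ) : WithTop ℤ) ≤ w.ord (r (n+1) - r n) := by
    intro n
    obtain ⟨hs1, hsq⟩ := hinv n
    have hs0 : w.ord (r n) = 0 := w.ord_sub_one_pos hs1
    have hsne : r n ≠ 0 := w.ord_ne_zero_of_ord (n := 0) (by exact_mod_cast hs0)
    have hden : (q : K) * r n ^ (q - 1) ≠ 0 := mul_ne_zero hqM0 (pow_ne_zero _ hsne)
    have hdenord : w.ord ((q : K) * r n ^ (q - 1)) = 0 := by
      rw [w.ord_mul, hqM, w.ord_pow_zero hs0, add_zero]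
    have heq : r (n+1) - r n = -((r n ^ q - u) / ((q : K) * r n ^ (q - 1))) := by
      rw [hrsucc]; ring
    have hdmul : (r n ^ q - u) / ((q : K) * r n ^ (q - 1)) * ((q : K) * r n ^ (q - 1))
        = r n ^ q - u := div_mul_cancel₀ _ hden
    have hdord : w.ord ((r n ^ q - u) / ((q : K) * r n ^ (q - 1))) = w.ord (r n ^ q - u) := by
      have h := w.ord_mul ((r n ^ q - u) / ((q : K) * r n ^ (q - 1))) ((q : K) * r n ^ (q - 1))
      rw [hdmul, hdenord, add_zero] at h
      exact h.symm
    rw [heq, w.ord_neg, hdord]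
    exact hsq
  refine ⟨r, fun n => w.ord_sub_one_pos (hinv n).1, fun n => (hinv n).2, ?_⟩
  intro n m hnm
  induction m, hnm using Nat.le_induction with
  | base =>
      rw [sub_self, w.ord_zero]; exact le_top
  | succ m hm ih =>
      have heq : r (m+1) - r n = (r (m+1) - r m) + (r m - r n) := by ring
      rw [heq]
      refine le_trans (le_min ?_ ih) (w.ord_add _ _)
      exact le_trans (WithTop.coe_le_coe.mpr (by omega)) (hstep m)

end Newton

section EquivSetup
open Polynomial IntermediateField

variable {M M' : Type} [Field M] [Field M'] [Algebra M M'] {q : ℕ} {u : M} {α : M'}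

lemma aeval_X_pow_sub_C (hα : α ^ q = algebraMap M M' u) :
    Polynomial.aeval α ((X : M[X]) ^ q - C u) = 0 := by
  rw [map_sub, map_pow, Polynomial.aeval_X, Polynomial.aeval_C, hα, sub_self]

lemma isIntegral_of_root (hq : q.Prime) (hα : α ^ q = algebraMap M M' u) : IsIntegral M α :=
  ⟨X ^ q - C u, monic_X_pow_sub_C u hq.ne_zero, aeval_X_pow_sub_C hα⟩

lemma minpoly_eq_X_pow_sub_C (H : Irreducible ((X : M[X]) ^ q - C u))
    (hα : α ^ q = algebraMap M M' u) : minpoly M α = X ^ q - C u :=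
  (minpoly.eq_of_irreducible_of_monic H (aeval_X_pow_sub_C hα)
    (monic_X_pow_sub_C u (ne_zero_of_irreducible_X_pow_sub_C H))).symm

lemma finiteDimensional_of_adjoin_root (hq : q.Prime) (hα : α ^ q = algebraMap M M' u)
    (hadj : IntermediateField.adjoin M {α} = ⊤) : FiniteDimensional M M' := by
  haveI h1 : FiniteDimensional M (IntermediateField.adjoin M {α}) :=
    IntermediateField.adjoin.finiteDimensional (isIntegral_of_root hq hα)
  haveI h2 : FiniteDimensional M (⊤ : IntermediateField M M') := by rw [← hadj]; exact h1
  exact (IntermediateField.topEquiv (F := M) (E := M')).toLinearEquiv.finiteDimensional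

lemma finrank_eq_q (hq : q.Prime) (H : Irreducible ((X : M[X]) ^ q - C u))
    (hα : α ^ q = algebraMap M M' u) (hadj : IntermediateField.adjoin M {α} = ⊤) :
    Module.finrank M M' = q := by
  haveI := finiteDimensional_of_adjoin_root hq hα hadj
  have h1 : Module.finrank M (IntermediateField.adjoin M {α}) = q := by
    rw [IntermediateField.adjoin.finrank (isIntegral_of_root hq hα),
      minpoly_eq_X_pow_sub_C H hα, natDegree_X_pow_sub_C]
  have h2 : Module.finrank M (⊤ : IntermediateField M M') = Module.finrank M M' :=
    (IntermediateField.topEquiv (F := M) (E := M')).toLinearEquiv.finrank_eq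
  rw [← h2, ← hadj, h1]

lemma isSplittingField_of_adjoin_root {ζ : M} (hq : q.Prime) (hζ : IsPrimitiveRoot ζ q)
    (H : Irreducible ((X : M[X]) ^ q - C u))
    (hα : α ^ q = algebraMap M M' u) (hadj : IntermediateField.adjoin M {α} = ⊤) :
    IsSplittingField M M' ((X : M[X]) ^ q - C u) := by
  haveI := finiteDimensional_of_adjoin_root hq hα hadj
  have hfr := finrank_eq_q hq H hα hadj
  have hK : (primitiveRoots (Module.finrank M M') M).Nonempty := by
    rw [hfr]
    exact ⟨ζ, (mem_primitiveRoots hq.pos).mpr hζ⟩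
  have ha' : α ^ (Module.finrank M M') = algebraMap M M' u := by rw [hfr]; exact hα
  have := isSplittingField_X_pow_sub_C_of_root_adjoin_eq_top hK ha' hadj
  rwa [hfr] at this

/-- The canonical equivalence `AdjoinRoot (X^q - C u) ≃ₐ[M] M'` sending the root to `α`. -/
lemma equiv_adjoinRoot {ζ : M} (hq : q.Prime) (hζ : IsPrimitiveRoot ζ q)
    (H : Irreducible ((X : M[X]) ^ q - C u))
    (hα : α ^ q = algebraMap M M' u) (hadj : IntermediateField.adjoin M {α} = ⊤) :
    ∃ Ψ : AdjoinRoot ((X : M[X]) ^ q - C u) ≃ₐ[M] M',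
      Ψ (AdjoinRoot.root _) = α := by
  haveI := isSplittingField_of_adjoin_root hq hζ H hα hadj
  have hK : (primitiveRoots q M).Nonempty := ⟨ζ, (mem_primitiveRoots hq.pos).mpr hζ⟩
  exact ⟨adjoinRootXPowSubCEquiv hK H hα, adjoinRootXPowSubCEquiv_root hK H hα⟩

end EquivSetup

section StepA
open Polynomial IntermediateField

variable {M M' : Type} [Field M] [Field M'] [Algebra M M']

theorem stepA {q : ℕ} (hq : q.Prime) (w : FFPrime M) {ζ : M} (hζ : IsPrimitiveRoot ζ q)
    (hnat : ∀ m : ℕ, 0 ≤ w.ord (m : M)) (hqM : w.ord (q : M) = 0)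
    {u : M} (hu : 0 < w.ord (u - 1)) {α : M'} (hα : α ^ q = algebraMap M M' u)
    (hadj : IntermediateField.adjoin M {α} = ⊤) :
    ∃ w' : FFPrime M', (∀ c : M, w'.ord (algebraMap M M' c) = w.ord c) ∧
      (∀ z : M', ∀ N : ℤ, ∃ c : M, (N : WithTop ℤ) < w'.ord (z - algebraMap M M' c)) := by
  by_cases hpow : ∃ s : M, s ^ q = u
  · -- trivial extension: α already lies in `M`
    obtain ⟨s, hs⟩ := hpow
    have hu0 : u ≠ 0 := by
      intro h
      rw [h, zero_sub, w.ord_neg, w.ord_one] at hu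
      exact lt_irrefl _ hu
    have hs0 : s ≠ 0 := fun h => hu0 (by rw [← hs, h, zero_pow hq.ne_zero])
    have hζ' : IsPrimitiveRoot (algebraMap M M' ζ) q :=
      hζ.map_of_injective (algebraMap M M').injective
    have hs'0 : algebraMap M M' s ≠ 0 :=
      fun h => hs0 ((_root_.map_eq_zero (algebraMap M M')).mp h)
    have hroot : (α / algebraMap M M' s) ^ q = 1 := by
      rw [div_pow, hα, ← hs, map_pow, div_self (pow_ne_zero _ hs'0)]
    have hprod := X_pow_sub_C_eq_prod (R := M') hζ' hq.pos (one_pow q)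
    have heval : (0 : M') = ∏ i ∈ Finset.range q, (α / algebraMap M M' s - (algebraMap M M' ζ) ^ i) := by
      have h := congrArg (Polynomial.eval (α / algebraMap M M' s)) hprod
      simpa [Polynomial.eval_prod, hroot] using h
    obtain ⟨i, _, hi⟩ := Finset.prod_eq_zero_iff.mp heval.symm
    have hαeq : α = algebraMap M M' (ζ ^ i * s) := by
      have h1 : α / algebraMap M M' s = (algebraMap M M' ζ) ^ i := by
        have := sub_eq_zero.mp hi
        simpa using this
      rw [map_mul, map_pow, ← h1, div_mul_cancel₀ _ hs'0]
    have hsurj : Function.Surjective (algebraMap M M') := by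
      intro z
      have hbot : IntermediateField.adjoin M {α} ≤ ⊥ := by
        rw [IntermediateField.adjoin_le_iff, Set.singleton_subset_iff]
        rw [SetLike.mem_coe, IntermediateField.mem_bot]
        exact ⟨ζ ^ i * s, hαeq.symm⟩
      have hz : z ∈ (⊥ : IntermediateField M M') := (hadj ▸ hbot) (by trivial)
      exact IntermediateField.mem_bot.mp hz
    set e := RingEquiv.ofBijective (algebraMap M M') ⟨(algebraMap M M').injective, hsurj⟩ with hedef
    refine ⟨w.pullback e.symm, fun c => ?_, fun z N => ?_⟩
    · show w.ord (e.symm (algebraMap M M' c)) = w.ord c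
      congr 1
      exact e.injective (by rw [RingEquiv.apply_symm_apply]; rfl)
    · refine ⟨e.symm z, ?_⟩
      have : algebraMap M M' (e.symm z) = z := by
        have := e.apply_symm_apply z
        exact this
      rw [this, sub_self]
      show (N : WithTop ℤ) < w.ord (e.symm 0)
      rw [map_zero, w.ord_zero]
      exact WithTop.coe_lt_top N
  · -- genuine degree-q extension
    push_neg at hpow
    have H : Irreducible ((X : M[X]) ^ q - C u) := X_pow_sub_C_irreducible_of_prime hq hpow
    haveI := Fact.mk H
    have hu1 : u ≠ 1 := fun h => (hpow 1) (by rw [one_pow, h])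
    obtain ⟨t₀, ht₀⟩ := w.ord_exists_int (sub_ne_zero.mpr hu1)
    have ht₀pos : 1 ≤ t₀ := by
      rw [ht₀] at hu
      exact_mod_cast (by exact_mod_cast hu : (0:ℤ) < t₀)
    obtain ⟨r, hr0, hre, hrc⟩ := newton_exists w hq hnat hqM ht₀ ht₀pos
    obtain ⟨wA, hAext, hAdens⟩ := stepA_core w hq t₀ ht₀pos r hr0 hre hrc
    obtain ⟨Ψ, hΨroot⟩ := equiv_adjoinRoot hq hζ H hα hadj
    refine ⟨wA.pullback Ψ.symm.toRingEquiv, fun c => ?_, fun z N => ?_⟩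
    · show wA.ord (Ψ.symm (algebraMap M M' c)) = w.ord c
      rw [AlgEquiv.commutes]
      exact hAext c
    · obtain ⟨c, hc⟩ := hAdens (Ψ.symm z) N
      refine ⟨c, ?_⟩
      show (N : WithTop ℤ) < wA.ord (Ψ.symm (z - algebraMap M M' c))
      rw [map_sub, AlgEquiv.commutes]
      exact hc

end StepA

section Residue
open Polynomial

variable {M : Type} [Field M]

/-- The valuation subring of `w`. -/
def valSubring (w : FFPrime M) : Subring M where
  carrier := {x | 0 ≤ w.ord x}
  zero_mem' := by simp only [Set.mem_setOf_eq, w.ord_zero]; exact le_top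
  one_mem' := by simp only [Set.mem_setOf_eq, w.ord_one]; exact le_refl _
  add_mem' := fun hx hy => le_trans (le_min hx hy) (w.ord_add _ _)
  mul_mem' := fun hx hy => by
    simp only [Set.mem_setOf_eq, w.ord_mul] at *
    exact add_nonneg hx hy
  neg_mem' := fun hx => by simpa only [Set.mem_setOf_eq, w.ord_neg] using hx

lemma mem_valSubring {w : FFPrime M} {x : M} : x ∈ valSubring w ↔ 0 ≤ w.ord x := Iff.rfl

/-- The maximal ideal of the valuation subring. -/
def valIdeal (w : FFPrime M) : Ideal (valSubring w) where
  carrier := {x | 0 < w.ord (x : M)}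
  zero_mem' := by
    simp only [Set.mem_setOf_eq, ZeroMemClass.coe_zero, w.ord_zero]
    exact WithTop.coe_lt_top 0
  add_mem' := fun hx hy => lt_of_lt_of_le (lt_min hx hy) (w.ord_add _ _)
  smul_mem' := fun c x hx => by
    show 0 < w.ord ((c : M) * (x : M))
    rw [w.ord_mul]
    have h := WithTop.add_lt_add_of_le_of_lt (w := (0 : WithTop ℤ)) (y := w.ord (c : M))
      (x := (0 : WithTop ℤ)) (z := w.ord (x : M)) (by simp) c.2 hx
    simpa using h

lemma mem_valIdeal {w : FFPrime M} {x : valSubring w} : x ∈ valIdeal w ↔ 0 < w.ord (x : M) :=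
  Iff.rfl

lemma valIdeal_isMaximal (w : FFPrime M) : (valIdeal w).IsMaximal := by
  rw [Ideal.isMaximal_iff]
  constructor
  · intro h1
    rw [mem_valIdeal] at h1
    simp only [OneMemClass.coe_one, w.ord_one] at h1
    exact lt_irrefl _ h1
  · intro J x hIJ hxI hxJ
    have hx0 : w.ord (x : M) = 0 := le_antisymm (not_lt.mp (fun h => hxI (mem_valIdeal.mpr h))) x.2
    have hxne : (x : M) ≠ 0 := w.ord_ne_zero_of_ord (n := 0) (by exact_mod_cast hx0)
    have hinv0 : w.ord ((x : M)⁻¹) = ((-0 : ℤ) : WithTop ℤ) :=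
      w.ord_inv (n := 0) (by exact_mod_cast hx0)
    set y : valSubring w := ⟨(x : M)⁻¹, by rw [mem_valSubring, hinv0]; exact_mod_cast (by norm_num : (0:ℤ) ≤ -0)⟩
    have hxy : x * y = 1 := Subtype.ext (by
      show (x : M) * (x : M)⁻¹ = 1
      exact mul_inv_cancel₀ hxne)
    exact hxy ▸ J.mul_mem_right y hxJ

/-- Lift of a polynomial with integral coefficients to the valuation subring. -/
def liftO (w : FFPrime M) (q : ℕ) (f : M[X]) (hf : ∀ i, 0 ≤ w.ord (f.coeff i)) :
    Polynomial (valSubring w) :=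
  ∑ i ∈ Finset.range q, monomial i (⟨f.coeff i, hf i⟩ : valSubring w)

lemma liftO_coeff (w : FFPrime M) (q : ℕ) (f : M[X]) (hf : ∀ i, 0 ≤ w.ord (f.coeff i)) (j : ℕ) :
    (liftO w q f hf).coeff j = if j < q then (⟨f.coeff j, hf j⟩ : valSubring w) else 0 :=
  coeff_monomial_sum q _ j

lemma liftO_map (w : FFPrime M) (q : ℕ) (f : M[X]) (hf : ∀ i, 0 ≤ w.ord (f.coeff i))
    (hdeg : f.natDegree < q) :
    (liftO w q f hf).map (valSubring w).subtype = f := by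
  rw [liftO, Polynomial.map_sum]
  conv_rhs => rw [f.as_sum_range' q hdeg]
  refine Finset.sum_congr rfl (fun i _ => ?_)
  rw [Polynomial.map_monomial]
  rfl

lemma liftO_degree_lt (w : FFPrime M) {q : ℕ} (hq : 0 < q) (f : M[X])
    (hf : ∀ i, 0 ≤ w.ord (f.coeff i)) :
    (liftO w q f hf).degree < (q : WithBot ℕ) :=
  degree_monomial_sum_lt hq _

end Residue

section Gauss
open Polynomial AdjoinRoot

variable {M : Type} [Field M] {q : ℕ} {a : M}

/-- The Gauss valuation on `AdjoinRoot (X^q - C a)` w.r.t. the power basis. -/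
def WA (w : FFPrime M) (hq : q.Prime) (z : AdjoinRoot ((X : M[X]) ^ q - C a)) : WithTop ℤ :=
  (Finset.range q).inf fun i => w.ord ((rep hq z).coeff i)

variable (w : FFPrime M) (hq : q.Prime)

lemma WA_le (z : AdjoinRoot ((X : M[X]) ^ q - C a)) {i : ℕ} (hi : i < q) :
    WA w hq z ≤ w.ord ((rep hq z).coeff i) :=
  Finset.inf_le (Finset.mem_range.mpr hi)

lemma le_WA {z : AdjoinRoot ((X : M[X]) ^ q - C a)} {B : WithTop ℤ}
    (h : ∀ i, i < q → B ≤ w.ord ((rep hq z).coeff i)) : B ≤ WA w hq z :=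
  Finset.le_inf (fun i hi => h i (Finset.mem_range.mp hi))

lemma WA_zero : WA w hq (0 : AdjoinRoot ((X : M[X]) ^ q - C a)) = ⊤ := by
  refine le_antisymm le_top (le_WA w hq (fun i _ => ?_))
  rw [rep_zero, Polynomial.coeff_zero, w.ord_zero]

lemma WA_attained {z : AdjoinRoot ((X : M[X]) ^ q - C a)} (hz : z ≠ 0) :
    ∃ i, i < q ∧ WA w hq z = w.ord ((rep hq z).coeff i) ∧ WA w hq z ≠ ⊤ := by
  obtain ⟨i, hi, hival⟩ := Finset.exists_mem_eq_inf (Finset.range q)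
    ⟨0, Finset.mem_range.mpr hq.pos⟩ (fun i => w.ord ((rep hq z).coeff i))
  refine ⟨i, Finset.mem_range.mp hi, hival, ?_⟩
  have hf0 : rep hq z ≠ 0 := fun h => hz ((rep_eq_zero_iff hq z).mp h)
  have hlead : (rep hq z).coeff (rep hq z).natDegree ≠ 0 := fun h =>
    hf0 (Polynomial.leadingCoeff_eq_zero.mp h)
  exact ne_top_of_le_ne_top (w.ord_ne_top _ hlead)
    (WA_le w hq z (rep_natDegree_lt hq z))

lemma WA_exists_int {z : AdjoinRoot ((X : M[X]) ^ q - C a)} (hz : z ≠ 0) :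
    ∃ k : ℤ, WA w hq z = (k : WithTop ℤ) := by
  obtain ⟨i, _, _, htop⟩ := WA_attained w hq hz
  obtain ⟨k, hk⟩ := WithTop.ne_top_iff_exists.mp htop
  exact ⟨k, hk.symm⟩

lemma WA_algebraMap (c : M) :
    WA w hq (algebraMap M (AdjoinRoot ((X : M[X]) ^ q - C a)) c) = w.ord c := by
  refine le_antisymm ?_ (le_WA w hq (fun i _ => ?_))
  · have h := WA_le w hq (algebraMap M (AdjoinRoot ((X : M[X]) ^ q - C a)) c) hq.pos
    rwa [rep_algebraMap, Polynomial.coeff_C, if_pos rfl] at h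
  · rw [rep_algebraMap, Polynomial.coeff_C]
    by_cases hi : i = 0
    · rw [if_pos hi]
    · rw [if_neg hi, w.ord_zero]; exact le_top

lemma WA_coeff_nonneg {z : AdjoinRoot ((X : M[X]) ^ q - C a)} (h : 0 ≤ WA w hq z) :
    ∀ i : ℕ, 0 ≤ w.ord ((rep hq z).coeff i) := by
  intro i
  by_cases hi : i < q
  · exact le_trans h (WA_le w hq z hi)
  · rw [Polynomial.coeff_eq_zero_of_natDegree_lt (lt_of_lt_of_le (rep_natDegree_lt hq z) (by omega)),
      w.ord_zero]
    exact le_top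

lemma WA_smul (c : M) (z : AdjoinRoot ((X : M[X]) ^ q - C a)) :
    WA w hq (algebraMap M _ c * z) = w.ord c + WA w hq z := by
  by_cases hc : c = 0
  · rw [hc, map_zero, zero_mul, WA_zero, w.ord_zero, top_add]
  have h1 : algebraMap M (AdjoinRoot ((X : M[X]) ^ q - C a)) c
      = AdjoinRoot.mk ((X : M[X]) ^ q - C a) (C c) := by
    rw [AdjoinRoot.algebraMap_eq]; rfl
  have hrep : rep hq (algebraMap M (AdjoinRoot ((X : M[X]) ^ q - C a)) c * z)
      = C c * rep hq z := by
    conv_lhs => rw [← mk_rep hq z]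
    rw [h1, ← map_mul]
    have hCp : (C c * rep hq z).degree ≤ (rep hq z).degree := by
      refine le_trans (degree_mul_le _ _) ?_
      calc (C c).degree + (rep hq z).degree ≤ 0 + (rep hq z).degree :=
            add_le_add degree_C_le le_rfl
      _ = (rep hq z).degree := zero_add _
    exact rep_eq_of_degree_lt hq _ (lt_of_le_of_lt hCp (rep_degree_lt hq z))
  show (Finset.range q).inf _ = _
  have hco : ∀ i ∈ Finset.range q,
      w.ord ((rep hq (algebraMap M (AdjoinRoot ((X : M[X]) ^ q - C a)) c * z)).coeff i)
      = w.ord c + w.ord ((rep hq z).coeff i) := by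
    intro i _
    rw [hrep, Polynomial.coeff_C_mul, w.ord_mul]
  rw [Finset.inf_congr rfl hco]
  -- now: inf (c + f) = c + inf f
  refine le_antisymm ?_ ?_
  · by_cases hz : z = 0
    · rw [hz, WA_zero, add_top]; exact le_top
    obtain ⟨i, hi, hival, _⟩ := WA_attained w hq hz
    refine le_trans (Finset.inf_le (Finset.mem_range.mpr hi)) ?_
    rw [hival]
  · refine Finset.le_inf (fun i hi => ?_)
    exact add_le_add le_rfl (Finset.inf_le hi)

end Gauss

section GaussMul
open Polynomial AdjoinRoot

variable {M : Type} [Field M] {q : ℕ} {a : M}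

lemma split_low_high (hq : 0 < q) (h : M[X]) (hdeg : h.natDegree < q + q) :
    h = (∑ i ∈ Finset.range q, monomial i (h.coeff i))
      + X ^ q * (∑ i ∈ Finset.range q, monomial i (h.coeff (q + i))) := by
  ext j
  rw [Polynomial.coeff_add, coeff_monomial_sum, Polynomial.coeff_X_pow_mul',
    coeff_monomial_sum]
  by_cases hj : j < q
  · rw [if_pos hj, if_neg (by omega), add_zero]
  · rw [if_neg hj, if_pos (by omega), zero_add]
    by_cases hj2 : j - q < q
    · rw [if_pos hj2]
      congr 1
      omega
    · rw [if_neg hj2, Polynomial.coeff_eq_zero_of_natDegree_lt (by omega)]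

lemma rep_mul_eq (hq : q.Prime) (z z' : AdjoinRoot ((X : M[X]) ^ q - C a)) :
    rep hq (z * z') =
      (∑ i ∈ Finset.range q, monomial i ((rep hq z * rep hq z').coeff i))
      + C a * (∑ i ∈ Finset.range q, monomial i ((rep hq z * rep hq z').coeff (q + i))) := by
  set h := rep hq z * rep hq z' with hh
  have hdeg : h.natDegree < q + q :=
    lt_of_le_of_lt natDegree_mul_le (by
      have h1 := rep_natDegree_lt hq z
      have h2 := rep_natDegree_lt hq z'
      omega)
  have hsplit := split_low_high hq.pos h hdeg
  have hdegsum : ((∑ i ∈ Finset.range q, monomial i (h.coeff i))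
      + C a * (∑ i ∈ Finset.range q, monomial i (h.coeff (q + i)))).degree
      < ((q : ℕ) : WithBot ℕ) := by
    refine lt_of_le_of_lt (Polynomial.degree_add_le _ _) (max_lt (degree_monomial_sum_lt hq.pos _) ?_)
    refine lt_of_le_of_lt (le_trans (degree_mul_le _ _) ?_) (degree_monomial_sum_lt hq.pos (fun i => h.coeff (q + i)))
    calc (C a).degree + _ ≤ 0 + _ := add_le_add degree_C_le le_rfl
    _ = _ := zero_add _
  have hmk : AdjoinRoot.mk ((X : M[X]) ^ q - C a)
      ((∑ i ∈ Finset.range q, monomial i (h.coeff i))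
        + C a * (∑ i ∈ Finset.range q, monomial i (h.coeff (q + i)))) = z * z' := by
    have hzz : z * z' = AdjoinRoot.mk ((X : M[X]) ^ q - C a) h := by
      rw [hh, map_mul, mk_rep, mk_rep]
    rw [hzz]
    rw [← sub_eq_zero, ← map_sub, AdjoinRoot.mk_eq_zero]
    refine ⟨-(∑ i ∈ Finset.range q, monomial i (h.coeff (q + i))), ?_⟩
    linear_combination -hsplit
  rw [← hmk, rep_eq_of_degree_lt hq _ hdegsum]

lemma coeff_mul_ord_nonneg (w : FFPrime M) {f g : M[X]}
    (hf : ∀ i, 0 ≤ w.ord (f.coeff i)) (hg : ∀ i, 0 ≤ w.ord (g.coeff i)) (k : ℕ) :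
    0 ≤ w.ord ((f * g).coeff k) := by
  rw [Polynomial.coeff_mul]
  refine w.ord_sum _ _ _ (fun p _ => ?_)
  rw [w.ord_mul]
  exact add_nonneg (hf _) (hg _)

set_option maxHeartbeats 1000000 in
set_option synthInstance.maxHeartbeats 400000 in
lemma WA_mul_unit [hHF : Fact (Irreducible ((X : M[X]) ^ q - C a))]
    (w : FFPrime M) (hq : q.Prime) (ha0 : 0 ≤ w.ord a)
    (hP : ∀ z : M, ¬ 0 < w.ord (a - z ^ q))
    {z z' : AdjoinRoot ((X : M[X]) ^ q - C a)}
    (hz : WA w hq z = 0) (hz' : WA w hq z' = 0) :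
    WA w hq (z * z') = 0 := by
  have hfz : ∀ i, 0 ≤ w.ord ((rep hq z).coeff i) := WA_coeff_nonneg w hq (by rw [hz])
  have hfz' : ∀ i, 0 ≤ w.ord ((rep hq z').coeff i) := WA_coeff_nonneg w hq (by rw [hz'])
  set h := rep hq z * rep hq z' with hh
  have hhco : ∀ i, 0 ≤ w.ord (h.coeff i) := coeff_mul_ord_nonneg w hfz hfz'
  set HP : M[X] := ∑ i ∈ Finset.range q, monomial i (h.coeff (q + i)) with hHP
  have hHPco : ∀ i, 0 ≤ w.ord (HP.coeff i) := by
    intro i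
    rw [hHP, coeff_monomial_sum]
    by_cases hi : i < q
    · rw [if_pos hi]; exact hhco _
    · rw [if_neg hi, w.ord_zero]; exact le_top
  have hrepzz : ∀ i, i < q → (rep hq (z * z')).coeff i = h.coeff i + a * h.coeff (q + i) := by
    intro i hi
    rw [rep_mul_eq hq z z', Polynomial.coeff_add, Polynomial.coeff_C_mul,
      coeff_monomial_sum, coeff_monomial_sum, if_pos hi, if_pos hi]
  have hWnonneg : 0 ≤ WA w hq (z * z') := by
    refine le_WA w hq (fun i hi => ?_)
    rw [hrepzz i hi]
    refine le_trans (le_min (hhco i) ?_) (w.ord_add _ _)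
    rw [w.ord_mul]
    exact add_nonneg ha0 (hhco _)
  by_contra hW0
  have hWpos : 0 < WA w hq (z * z') := lt_of_le_of_ne hWnonneg (Ne.symm hW0)
  have hrepco : ∀ i, 0 ≤ w.ord ((rep hq (z * z')).coeff i) := WA_coeff_nonneg w hq hWnonneg
  -- residue field
  haveI hmax := valIdeal_isMaximal w
  letI : Field ((valSubring w) ⧸ valIdeal w) := Ideal.Quotient.field (valIdeal w)
  set ρ := Ideal.Quotient.mk (valIdeal w) with hρ
  set aO : valSubring w := ⟨a, ha0⟩ with haO
  -- the identity upstairs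
  have hid_M : rep hq z * rep hq z' = ((X : M[X]) ^ q - C a) * HP + rep hq (z * z') := by
    have hdeg : h.natDegree < q + q :=
      lt_of_le_of_lt natDegree_mul_le (by
        have h1 := rep_natDegree_lt hq z
        have h2 := rep_natDegree_lt hq z'
        omega)
    have hsplit := split_low_high hq.pos h hdeg
    rw [← hh, rep_mul_eq hq z z', ← hHP]
    conv_lhs => rw [hsplit]
    ring
  have hid_O : liftO w q (rep hq z) hfz * liftO w q (rep hq z') hfz'
      = ((X : Polynomial (valSubring w)) ^ q - C aO) * liftO w q HP hHPco
        + liftO w q (rep hq (z * z')) hrepco := by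
    apply Polynomial.map_injective ((valSubring w).subtype) Subtype.val_injective
    rw [Polynomial.map_mul, Polynomial.map_add, Polynomial.map_mul, Polynomial.map_sub,
      Polynomial.map_pow, Polynomial.map_X, Polynomial.map_C]
    rw [liftO_map w q _ _ (rep_natDegree_lt hq z), liftO_map w q _ _ (rep_natDegree_lt hq z'),
      liftO_map w q _ _ ((degree_lt_coe_iff_natDegree_lt hq.pos).mp
        (by rw [hHP]; exact degree_monomial_sum_lt hq.pos _)),
      liftO_map w q _ _ (rep_natDegree_lt hq (z * z'))]
    exact hid_M
  -- push to the residue field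
  have hmapid := congrArg (Polynomial.map ρ) hid_O
  rw [Polynomial.map_mul, Polynomial.map_add, Polynomial.map_mul, Polynomial.map_sub,
    Polynomial.map_pow, Polynomial.map_X, Polynomial.map_C] at hmapid
  have hR0 : (liftO w q (rep hq (z * z')) hrepco).map ρ = 0 := by
    ext j
    rw [Polynomial.coeff_map, Polynomial.coeff_zero, liftO_coeff]
    by_cases hj : j < q
    · rw [if_pos hj]
      rw [hρ, Ideal.Quotient.eq_zero_iff_mem, mem_valIdeal]
      exact lt_of_lt_of_le hWpos (WA_le w hq (z * z') hj)
    · rw [if_neg hj, map_zero]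
  rw [hR0, add_zero] at hmapid
  -- irreducibility of the residual polynomial
  have hpownot : ∀ b : (valSubring w) ⧸ valIdeal w, b ^ q ≠ ρ aO := by
    intro b hb
    obtain ⟨c, rfl⟩ := Ideal.Quotient.mk_surjective b
    rw [← map_pow, ← sub_eq_zero, ← map_sub, Ideal.Quotient.eq_zero_iff_mem, mem_valIdeal] at hb
    refine hP (c : M) ?_
    have hcoe : ((c ^ q - aO : valSubring w) : M) = (c : M) ^ q - a := by
      push_cast
      rfl
    have : 0 < w.ord ((c : M) ^ q - a) := by rw [← hcoe]; exact hb
    rwa [show a - (c:M)^q = -((c:M)^q - a) by ring, w.ord_neg]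
  have Hκ : Irreducible ((X : Polynomial ((valSubring w) ⧸ valIdeal w)) ^ q - C (ρ aO)) :=
    X_pow_sub_C_irreducible_of_prime hq hpownot
  have hprime : Prime ((X : Polynomial ((valSubring w) ⧸ valIdeal w)) ^ q - C (ρ aO)) :=
    Hκ.prime
  -- the two factors are nonzero of degree < q
  have hF : ∀ (zz : AdjoinRoot ((X : M[X]) ^ q - C a))
      (hzz : WA w hq zz = 0) (hco : ∀ i, 0 ≤ w.ord ((rep hq zz).coeff i)),
      (liftO w q (rep hq zz) hco).map ρ ≠ 0 ∧
      ((liftO w q (rep hq zz) hco).map ρ).degree < ((q : ℕ) : WithBot ℕ) := by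
    intro zz hzz hco
    constructor
    · have hzz0 : zz ≠ 0 := by
        intro h0
        rw [h0, WA_zero] at hzz
        simp at hzz
      obtain ⟨i, hiq, hival, _⟩ := WA_attained w hq hzz0
      intro hF0
      have := congrArg (fun P => Polynomial.coeff P i) hF0
      simp only [Polynomial.coeff_map, Polynomial.coeff_zero] at this
      rw [liftO_coeff, if_pos hiq, hρ, Ideal.Quotient.eq_zero_iff_mem, mem_valIdeal] at this
      rw [hzz] at hival
      exact lt_irrefl _ (by rw [← hival] at this; exact this)
    · exact lt_of_le_of_lt (Polynomial.degree_map_le) (liftO_degree_lt w hq.pos _ _)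
  obtain ⟨hF1ne, hF1deg⟩ := hF z hz hfz
  obtain ⟨hF2ne, hF2deg⟩ := hF z' hz' hfz'
  have hdvd : ((X : Polynomial ((valSubring w) ⧸ valIdeal w)) ^ q - C (ρ aO))
      ∣ ((liftO w q (rep hq z) hfz).map ρ) * ((liftO w q (rep hq z') hfz').map ρ) :=
    ⟨(liftO w q HP hHPco).map ρ, hmapid⟩
  have hdegX : ((X : Polynomial ((valSubring w) ⧸ valIdeal w)) ^ q - C (ρ aO)).degree
      = ((q : ℕ) : WithBot ℕ) := degree_X_pow_sub_C hq.pos _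
  rcases hprime.2.2 _ _ hdvd with hh1 | hh1
  · have := Polynomial.degree_le_of_dvd hh1 hF1ne
    rw [hdegX] at this
    exact absurd hF1deg (not_lt.mpr this)
  · have := Polynomial.degree_le_of_dvd hh1 hF2ne
    rw [hdegX] at this
    exact absurd hF2deg (not_lt.mpr this)

end GaussMul

section GaussFinal
open Polynomial AdjoinRoot

variable {M : Type} [Field M] {q : ℕ} {a : M}

set_option maxHeartbeats 1000000 in
lemma WA_mul [hHF : Fact (Irreducible ((X : M[X]) ^ q - C a))]
    (w : FFPrime M) (hq : q.Prime) (ha0 : 0 ≤ w.ord a)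
    (hP : ∀ z : M, ¬ 0 < w.ord (a - z ^ q))
    (z z' : AdjoinRoot ((X : M[X]) ^ q - C a)) :
    WA w hq (z * z') = WA w hq z + WA w hq z' := by
  by_cases hz : z = 0
  · rw [hz, zero_mul, WA_zero, top_add]
  by_cases hz' : z' = 0
  · rw [hz', mul_zero, WA_zero, add_top]
  obtain ⟨k, hk⟩ := WA_exists_int w hq hz
  obtain ⟨k', hk'⟩ := WA_exists_int w hq hz'
  obtain ⟨π, hπ⟩ := w.ord_surj k
  obtain ⟨π', hπ'⟩ := w.ord_surj k'
  have hπne : π ≠ 0 := w.ord_ne_zero_of_ord hπ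
  have hπ'ne : π' ≠ 0 := w.ord_ne_zero_of_ord hπ'
  set z1 := algebraMap M (AdjoinRoot ((X : M[X]) ^ q - C a)) π⁻¹ * z with hz1
  set z1' := algebraMap M (AdjoinRoot ((X : M[X]) ^ q - C a)) π'⁻¹ * z' with hz1'
  have hWz1 : WA w hq z1 = 0 := by
    rw [hz1, WA_smul, w.ord_inv hπ, hk, ← WithTop.coe_add]
    norm_num
  have hWz1' : WA w hq z1' = 0 := by
    rw [hz1', WA_smul, w.ord_inv hπ', hk', ← WithTop.coe_add]
    norm_num
  have hunit := WA_mul_unit w hq ha0 hP hWz1 hWz1'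
  have hfact : z * z' = algebraMap M (AdjoinRoot ((X : M[X]) ^ q - C a)) (π * π') * (z1 * z1') := by
    rw [hz1, hz1']
    calc z * z' = (algebraMap M (AdjoinRoot ((X : M[X]) ^ q - C a)) π
          * algebraMap M (AdjoinRoot ((X : M[X]) ^ q - C a)) π⁻¹)
          * ((algebraMap M (AdjoinRoot ((X : M[X]) ^ q - C a)) π'
          * algebraMap M (AdjoinRoot ((X : M[X]) ^ q - C a)) π'⁻¹) * (z * z')) := by
          rw [← map_mul, mul_inv_cancel₀ hπne, map_one, ← map_mul, mul_inv_cancel₀ hπ'ne,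
            map_one, one_mul, one_mul]
    _ = _ := by rw [map_mul]; ring
  rw [hfact, WA_smul, hunit, add_zero, w.ord_mul, hπ, hπ', hk, hk', ← WithTop.coe_add]

set_option maxHeartbeats 1000000 in
set_option synthInstance.maxHeartbeats 400000 in
lemma WA_aut [hHF : Fact (Irreducible ((X : M[X]) ^ q - C a))]
    (w : FFPrime M) (hq : q.Prime) {ζ : M} (hζ : IsPrimitiveRoot ζ q)
    (τ : AdjoinRoot ((X : M[X]) ^ q - C a) ≃ₐ[M] AdjoinRoot ((X : M[X]) ^ q - C a))
    (z : AdjoinRoot ((X : M[X]) ^ q - C a)) :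
    WA w hq (τ z) = WA w hq z := by
  haveI : NeZero q := ⟨hq.ne_zero⟩
  have H : Irreducible ((X : M[X]) ^ q - C a) := hHF.out
  have hK : (primitiveRoots q M).Nonempty := ⟨ζ, (mem_primitiveRoots hq.pos).mpr hζ⟩
  obtain ⟨η, hη⟩ := (autAdjoinRootXPowSubCEquiv hK H).surjective τ
  have hτroot : τ (AdjoinRoot.root _) = ((η : Mˣ) : M) • AdjoinRoot.root _ := by
    rw [← hη]; exact autAdjoinRootXPowSubCEquiv_root hK H η
  set c : M := ((η : Mˣ) : M) with hc
  have hcq : c ^ q = 1 := by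
    have h2 := η.2
    rw [mem_rootsOfUnity] at h2
    have := congrArg (Units.val) h2
    rw [Units.val_pow_eq_pow_val] at this
    exact this
  have hc0 : w.ord c = 0 := w.ord_eq_zero_of_pow_eq_one hq.ne_zero hcq
  set f := rep hq z with hf
  set fη : M[X] := ∑ i ∈ Finset.range q, monomial i (f.coeff i * c ^ i) with hfη
  have hτz : τ z = AdjoinRoot.mk ((X : M[X]) ^ q - C a) fη := by
    conv_lhs => rw [← mk_rep hq z, ← AdjoinRoot.aeval_eq, ← hf]
    have h2 : τ (Polynomial.aeval (AdjoinRoot.root ((X : M[X]) ^ q - C a)) f)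
        = Polynomial.aeval (τ (AdjoinRoot.root ((X : M[X]) ^ q - C a))) f := by
      exact (Polynomial.aeval_algHom_apply (τ : AdjoinRoot ((X : M[X]) ^ q - C a) →ₐ[M]
        AdjoinRoot ((X : M[X]) ^ q - C a)) _ f).symm
    rw [h2, hτroot, ← AdjoinRoot.aeval_eq]
    rw [Polynomial.aeval_eq_sum_range' (n := q) (rep_natDegree_lt hq z)]
    rw [hfη, map_sum]
    refine Finset.sum_congr rfl (fun i _ => ?_)
    rw [Polynomial.aeval_monomial, _root_.smul_pow, smul_smul, Algebra.smul_def]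
  have hrepτ : rep hq (τ z) = fη := by
    rw [hτz, rep_eq_of_degree_lt hq _ (by rw [hfη]; exact degree_monomial_sum_lt hq.pos _)]
  show (Finset.range q).inf _ = (Finset.range q).inf _
  refine Finset.inf_congr rfl (fun i hi => ?_)
  rw [hrepτ, hfη, coeff_monomial_sum, if_pos (Finset.mem_range.mp hi), w.ord_mul,
    w.ord_pow_zero hc0, add_zero, hf]

end GaussFinal

lemma nsmul_coe_withTop (n : ℕ) (m : ℤ) :
    n • ((m : ℤ) : WithTop ℤ) = ((n * m : ℤ) : WithTop ℤ) := by
  induction n with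
  | zero => simp
  | succ n ih =>
      rw [succ_nsmul, ih, ← WithTop.coe_add]
      congr 1
      push_cast
      ring

section StepB
open Polynomial IntermediateField

theorem stepB {M M' : Type} [Field M] [Field M'] [Algebra M M'] {q : ℕ} (hq : q.Prime)
    (w : FFPrime M) {ζ : M} (hζ : IsPrimitiveRoot ζ q)
    {a : M} (ha0 : w.ord a = 0) (hP : ∀ z : M, ¬ 0 < w.ord (a - z ^ q))
    {α : M'} (hα : α ^ q = algebraMap M M' a) (hadj : IntermediateField.adjoin M {α} = ⊤)
    (y : M') (hy : y ≠ 0) :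
    ∃ n : ℤ, w.ord (Algebra.norm M y) = ((q * n : ℤ) : WithTop ℤ) := by
  have ha0' : 0 ≤ w.ord a := by rw [ha0]
  have hpow : ∀ b : M, b ^ q ≠ a := by
    intro b hb
    refine hP b ?_
    rw [hb, sub_self, w.ord_zero]
    exact WithTop.coe_lt_top 0
  have H : Irreducible ((X : M[X]) ^ q - C a) := X_pow_sub_C_irreducible_of_prime hq hpow
  haveI := Fact.mk H
  haveI := finiteDimensional_of_adjoin_root hq hα hadj
  haveI := isSplittingField_of_adjoin_root hq hζ H hα hadj
  have hK : (primitiveRoots q M).Nonempty := ⟨ζ, (mem_primitiveRoots hq.pos).mpr hζ⟩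
  haveI : IsGalois M M' := isGalois_of_isSplittingField_X_pow_sub_C hK H M'
  have hfr : Module.finrank M M' = q := finrank_eq_q hq H hα hadj
  obtain ⟨Ψ, hΨ⟩ := equiv_adjoinRoot hq hζ H hα hadj
  set W' : M' → WithTop ℤ := fun s => WA w hq (Ψ.symm s) with hW'def
  have hW'alg : ∀ c : M, W' (algebraMap M M' c) = w.ord c := by
    intro c
    show WA w hq (Ψ.symm (algebraMap M M' c)) = w.ord c
    rw [AlgEquiv.commutes, WA_algebraMap]
  have hW'mul : ∀ s s' : M', W' (s * s') = W' s + W' s' := by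
    intro s s'
    show WA w hq (Ψ.symm (s * s')) = _
    rw [map_mul]
    exact WA_mul w hq ha0' hP _ _
  have hW'aut : ∀ (σ : M' ≃ₐ[M] M') (s : M'), W' (σ s) = W' s := by
    intro σ s
    have h1 : Ψ.symm (σ s) = ((Ψ.trans σ).trans Ψ.symm) (Ψ.symm s) := by
      simp only [AlgEquiv.trans_apply, AlgEquiv.apply_symm_apply]
    show WA w hq (Ψ.symm (σ s)) = WA w hq (Ψ.symm s)
    rw [h1]
    exact WA_aut w hq hζ _ _
  have hprod : ∀ (s : Finset (M' ≃ₐ[M] M')) (F : (M' ≃ₐ[M] M') → M'),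
      W' (∏ σ ∈ s, F σ) = ∑ σ ∈ s, W' (F σ) := by
    intro s F
    classical
    induction s using Finset.induction with
    | empty =>
        rw [Finset.prod_empty, Finset.sum_empty]
        have := hW'alg 1
        rwa [map_one, w.ord_one] at this
    | @insert b s' hb ih =>
        rw [Finset.prod_insert hb, Finset.sum_insert hb, hW'mul, ih]
  have hnorm := Algebra.norm_eq_prod_automorphisms (K := M) y
  have hcard : Fintype.card (M' ≃ₐ[M] M') = q := by
    rw [← Nat.card_eq_fintype_card, IsGalois.card_aut_eq_finrank, hfr]
  obtain ⟨k, hk⟩ : ∃ k : ℤ, W' y = (k : WithTop ℤ) := by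
    have hy' : Ψ.symm y ≠ 0 := fun h => hy (by
      have := congrArg Ψ h
      rwa [AlgEquiv.apply_symm_apply, map_zero] at this)
    exact WA_exists_int w hq hy'
  refine ⟨k, ?_⟩
  calc w.ord (Algebra.norm M y) = W' (algebraMap M M' (Algebra.norm M y)) := (hW'alg _).symm
  _ = W' (∏ σ : M' ≃ₐ[M] M', σ y) := by rw [hnorm]
  _ = ∑ _σ : M' ≃ₐ[M] M', W' y := by
      rw [hprod Finset.univ (fun σ => σ y)]
      exact Finset.sum_congr rfl (fun σ _ => hW'aut σ y)
  _ = Fintype.card (M' ≃ₐ[M] M') • W' y := by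
      rw [Finset.sum_const, Finset.card_univ]
  _ = ((q * k : ℤ) : WithTop ℤ) := by rw [hcard, hk, nsmul_coe_withTop]

end StepB

section Transfer

lemma transferP {M M' : Type} [Field M] [Field M'] [Algebra M M'] {q : ℕ} (hq : 0 < q)
    (w : FFPrime M) (w' : FFPrime M')
    (hext : ∀ c : M, w'.ord (algebraMap M M' c) = w.ord c)
    (hdens : ∀ z : M', ∀ N : ℤ, ∃ c : M, (N : WithTop ℤ) < w'.ord (z - algebraMap M M' c))
    {a : M} (ha0 : w.ord a = 0) (hP : ∀ z : M, ¬ 0 < w.ord (a - z ^ q)) :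
    ∀ z : M', ¬ 0 < w'.ord (algebraMap M M' a - z ^ q) := by
  intro z hcon
  have ha0' : w'.ord (algebraMap M M' a) = 0 := by rw [hext, ha0]
  by_cases hz : z = 0
  · rw [hz, zero_pow hq.ne', sub_zero, ha0'] at hcon
    exact lt_irrefl _ hcon
  rcases w'.ord_exists_int hz with ⟨mz, hmz⟩
  by_cases hneg : mz < 0
  · have hzq : w'.ord (z ^ q) = ((q * mz : ℤ) : WithTop ℤ) := w'.ord_pow_coe hmz q
    have hqmz : (q : ℤ) * mz < 0 := by
      have : (1 : ℤ) ≤ (q : ℤ) := by exact_mod_cast hq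
      nlinarith
    have hlt : w'.ord (-(z ^ q)) < w'.ord (algebraMap M M' a) := by
      rw [w'.ord_neg, hzq, ha0']
      exact_mod_cast hqmz
    have heq : w'.ord (algebraMap M M' a - z ^ q) = w'.ord (-(z ^ q)) := by
      rw [show algebraMap M M' a - z ^ q = -(z ^ q) + algebraMap M M' a by ring,
        w'.ord_add_left hlt]
    rw [heq, w'.ord_neg, hzq] at hcon
    have : (0 : ℤ) < (q : ℤ) * mz := by exact_mod_cast hcon
    omega
  · push_neg at hneg
    obtain ⟨c, hc⟩ := hdens z 0
    have hc' : (0 : WithTop ℤ) < w'.ord (z - algebraMap M M' c) := by exact_mod_cast hc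
    have hordz : 0 ≤ w'.ord z := by
      rw [hmz]
      exact_mod_cast hneg
    have hordc : 0 ≤ w'.ord (algebraMap M M' c) := by
      have h1 := w'.ord_add z (-(z - algebraMap M M' c))
      rw [w'.ord_neg, show z + -(z - algebraMap M M' c) = algebraMap M M' c by ring] at h1
      exact le_trans (le_min hordz hc'.le) h1
    have hcM : 0 ≤ w.ord c := by rw [← hext]; exact hordc
    have hPc := hP c
    have hordac : w.ord (a - c ^ q) ≤ 0 := not_lt.mp hPc
    have hzq_pos : 0 < w'.ord ((algebraMap M M' c) ^ q - z ^ q) := by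
      rw [show (algebraMap M M' c) ^ q - z ^ q = -(z ^ q - (algebraMap M M' c) ^ q) by ring,
        w'.ord_neg]
      have hg := geom_sum₂_mul z (algebraMap M M' c) q
      rw [← hg, w'.ord_mul]
      have hsum : (0 : WithTop ℤ) ≤
          w'.ord (∑ i ∈ Finset.range q, z ^ i * (algebraMap M M' c) ^ (q - 1 - i)) :=
        w'.ord_sum _ _ _ (fun i _ => by
          rw [w'.ord_mul]
          exact add_nonneg (w'.ord_pow_nonneg hordz _) (w'.ord_pow_nonneg hordc _))
      have h2 := WithTop.add_lt_add_of_le_of_lt (w := (0 : WithTop ℤ)) (y := _)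
        (x := (0 : WithTop ℤ)) (z := _) (by simp) hsum hc'
      simpa using h2
    have hfinal : w'.ord (algebraMap M M' a - z ^ q) = w.ord (a - c ^ q) := by
      rw [show algebraMap M M' a - z ^ q
          = algebraMap M M' (a - c ^ q) + ((algebraMap M M' c) ^ q - z ^ q) by
            rw [map_sub, map_pow]; ring]
      rw [w'.ord_add_left (by rw [hext]; exact lt_of_le_of_lt hordac hzq_pos), hext]
    rw [hfinal] at hcon
    exact absurd hcon (not_lt.mpr hordac)

end Transfer

section Glue

theorem statement17' (p q : ℕ) [Fact p.Prime] (hq : q.Prime) (hqp : q ≠ p)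
    (K : Type) [Field K] [Algebra (RatFunc (ZMod p)) K]
    [FiniteDimensional (RatFunc (ZMod p)) K]
    (ζ : K) (hζ : IsPrimitiveRoot ζ q)
    (a b x : K) (ha : a ≠ 0) (hb : b ≠ 0) (hx : x ≠ 0)
    (v : FFPrime K)
    (h1 : v.ord b < 0) (h1' : ¬ ∃ n : ℤ, v.ord b = (((q : ℤ) * n : ℤ) : WithTop ℤ))
    (h2 : v.ord a = 0) (h2' : ¬ ∃ u : K, 0 < v.ord (a - u ^ q))
    (h3 : ((q : ℤ) : WithTop ℤ) * v.ord x < (((q : ℤ) - 1 : ℤ) : WithTop ℤ) * v.ord b) :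
    ∀ (M1 : Type) [Field M1] [Algebra K M1] (α1 : M1),
    α1 ^ q = algebraMap K M1 (1 + (b * x ^ q + b ^ q)⁻¹) →
    IntermediateField.adjoin K {α1} = ⊤ →
    ∀ (M3 : Type) [Field M3] [Algebra M1 M3] (α3 : M3),
      α3 ^ q = algebraMap M1 M3 (algebraMap K M1 (1 + x⁻¹)) →
      IntermediateField.adjoin M1 {α3} = ⊤ →
      ∀ (M4 : Type) [Field M4] [Algebra M3 M4] (α4 : M4),
        α4 ^ q = algebraMap M3 M4 (algebraMap M1 M3 (algebraMap K M1 (1 + (a + a⁻¹) * x⁻¹))) →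
        IntermediateField.adjoin M3 {α4} = ⊤ →
        ∀ (M5 : Type) [Field M5] [Algebra M4 M5] (α5 : M5),
          α5 ^ q = algebraMap M4 M5 (algebraMap M3 M4 (algebraMap M1 M3 (algebraMap K M1 a))) →
          IntermediateField.adjoin M4 {α5} = ⊤ →
          ¬ ∃ y : M5, Algebra.norm M4 y =
            algebraMap M3 M4 (algebraMap M1 M3 (algebraMap K M1 (b * x ^ q + b ^ q))) := by
  -- integer values of the valuations
  have hq2 := hq.two_le
  have hqZ : (2 : ℤ) ≤ (q : ℤ) := by exact_mod_cast hq2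
  obtain ⟨vb, hvb⟩ := v.ord_exists_int hb
  obtain ⟨vx, hvx⟩ := v.ord_exists_int hx
  have hvb_neg : vb < 0 := by
    rw [hvb] at h1
    exact_mod_cast h1
  have h3' : (q : ℤ) * vx < ((q : ℤ) - 1) * vb := by
    rw [hvx, hvb, ← WithTop.coe_mul, ← WithTop.coe_mul] at h3
    exact_mod_cast h3
  have hvx_neg : vx < 0 := by nlinarith
  -- the order of b x^q + b^q
  have hbxq : v.ord (b * x ^ q) = ((vb + q * vx : ℤ) : WithTop ℤ) := by
    rw [v.ord_mul, hvb, v.ord_pow_coe hvx q, ← WithTop.coe_add]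
  have hbq : v.ord (b ^ q) = ((q * vb : ℤ) : WithTop ℤ) := v.ord_pow_coe hvb q
  have hlt : v.ord (b * x ^ q) < v.ord (b ^ q) := by
    rw [hbxq, hbq]
    exact_mod_cast (by nlinarith : vb + (q : ℤ) * vx < (q : ℤ) * vb)
  have hc0ord : v.ord (b * x ^ q + b ^ q) = ((vb + q * vx : ℤ) : WithTop ℤ) := by
    rw [v.ord_add_left hlt, hbxq]
  have hc0ne : b * x ^ q + b ^ q ≠ 0 := v.ord_ne_zero_of_ord hc0ord
  have hc0neg : vb + (q : ℤ) * vx < 0 := by nlinarith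
  -- prime field facts
  set χ : ZMod p →+* K :=
    (algebraMap (RatFunc (ZMod p)) K).comp (algebraMap (ZMod p) (RatFunc (ZMod p))) with hχ
  have hfield : ∀ m : ℕ, (m : K) = 0 ∨ (m : K) ^ (p - 1) = 1 := by
    intro m
    have hm : (m : K) = χ (m : ZMod p) := (map_natCast χ m).symm
    by_cases h0 : (m : ZMod p) = 0
    · left; rw [hm, h0, map_zero]
    · right
      rw [hm, ← map_pow, ZMod.pow_card_sub_one_eq_one h0, map_one]
  have hp2 := (Fact.out : p.Prime).two_le
  have hnatK : ∀ m : ℕ, 0 ≤ v.ord (m : K) := by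
    intro m
    rcases hfield m with h | h
    · rw [h, v.ord_zero]; exact le_top
    · rw [v.ord_eq_zero_of_pow_eq_one (by omega) h]
  have hqK0 : (q : K) ≠ 0 := by
    intro h0
    have hz : (q : ZMod p) = 0 := by
      have hm : (q : K) = χ (q : ZMod p) := (map_natCast χ q).symm
      rw [hm] at h0
      exact χ.injective (by rw [h0, map_zero])
    have hdvd : p ∣ q := (ZMod.natCast_eq_zero_iff q p).mp hz
    exact hqp ((Nat.prime_dvd_prime_iff_eq Fact.out hq).mp hdvd).symm
  have hqK : v.ord (q : K) = 0 := by
    rcases hfield q with h | h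
    · exact absurd h hqK0
    · exact v.ord_eq_zero_of_pow_eq_one (by omega) h
  have hPK : ∀ z : K, ¬ 0 < v.ord (a - z ^ q) := fun z hz => h2' ⟨z, hz⟩
  -- the tower
  intro M1 _ _ α1 hα1 hadj1 M3 _ _ α3 hα3 hadj3 M4 _ _ α4 hα4 hadj4 M5 _ _ α5 hα5 hadj5
  rintro ⟨y, hNy⟩
  -- step 1
  have hu1ord : 0 < v.ord ((1 + (b * x ^ q + b ^ q)⁻¹) - 1) := by
    rw [show (1 + (b * x ^ q + b ^ q)⁻¹) - 1 = (b * x ^ q + b ^ q)⁻¹ by ring,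
      v.ord_inv hc0ord]
    exact_mod_cast (by omega : (0 : ℤ) < -(vb + (q : ℤ) * vx))
  obtain ⟨w1, hext1, hdens1⟩ := stepA hq v hζ hnatK hqK hu1ord hα1 hadj1
  have hζ1 : IsPrimitiveRoot (algebraMap K M1 ζ) q :=
    hζ.map_of_injective (algebraMap K M1).injective
  have hnat1 : ∀ m : ℕ, 0 ≤ w1.ord ((m : M1)) := fun m => by
    rw [show ((m : M1)) = algebraMap K M1 (m : K) from (map_natCast _ m).symm, hext1]
    exact hnatK m
  have hq1 : w1.ord ((q : M1)) = 0 := by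
    rw [show ((q : M1)) = algebraMap K M1 (q : K) from (map_natCast _ q).symm, hext1, hqK]
  have ha1 : w1.ord (algebraMap K M1 a) = 0 := by rw [hext1, h2]
  have hP1 : ∀ z : M1, ¬ 0 < w1.ord (algebraMap K M1 a - z ^ q) :=
    transferP hq.pos v w1 hext1 hdens1 h2 hPK
  -- step 2
  have hvxinv : v.ord x⁻¹ = ((-vx : ℤ) : WithTop ℤ) := v.ord_inv hvx
  have hu3ord : 0 < w1.ord (algebraMap K M1 (1 + x⁻¹) - 1) := by
    rw [show algebraMap K M1 (1 + x⁻¹) - 1 = algebraMap K M1 ((1 + x⁻¹) - 1) by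
        rw [map_sub, map_one],
      hext1, show (1 + x⁻¹) - 1 = x⁻¹ by ring, hvxinv]
    exact_mod_cast (by omega : (0 : ℤ) < -vx)
  obtain ⟨w3, hext3, hdens3⟩ := stepA hq w1 hζ1 hnat1 hq1 hu3ord hα3 hadj3
  have hζ3 : IsPrimitiveRoot (algebraMap M1 M3 (algebraMap K M1 ζ)) q :=
    hζ1.map_of_injective (algebraMap M1 M3).injective
  have hnat3 : ∀ m : ℕ, 0 ≤ w3.ord ((m : M3)) := fun m => by
    rw [show ((m : M3)) = algebraMap M1 M3 (m : M1) from (map_natCast _ m).symm, hext3]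
    exact hnat1 m
  have hq3 : w3.ord ((q : M3)) = 0 := by
    rw [show ((q : M3)) = algebraMap M1 M3 (q : M1) from (map_natCast _ q).symm, hext3, hq1]
  have ha3 : w3.ord (algebraMap M1 M3 (algebraMap K M1 a)) = 0 := by rw [hext3, ha1]
  have hP3 : ∀ z : M3, ¬ 0 < w3.ord (algebraMap M1 M3 (algebraMap K M1 a) - z ^ q) :=
    transferP hq.pos w1 w3 hext3 hdens3 ha1 hP1
  -- step 3
  have haainv : 0 ≤ v.ord (a + a⁻¹) := by
    refine le_trans (le_min ?_ ?_) (v.ord_add _ _)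
    · rw [h2]
    · rw [v.ord_inv (n := 0) (by exact_mod_cast h2)]
      exact_mod_cast (by norm_num : (0 : ℤ) ≤ -0)
  have hu4K : 0 < v.ord ((1 + (a + a⁻¹) * x⁻¹) - 1) := by
    rw [show (1 + (a + a⁻¹) * x⁻¹) - 1 = (a + a⁻¹) * x⁻¹ by ring, v.ord_mul, hvxinv]
    have h0 := WithTop.add_lt_add_of_le_of_lt (w := (0 : WithTop ℤ)) (y := v.ord (a + a⁻¹))
      (x := (0 : WithTop ℤ)) (z := ((-vx : ℤ) : WithTop ℤ)) (by simp) haainv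
      (by exact_mod_cast (by omega : (0 : ℤ) < -vx))
    simpa using h0
  have hu4ord : 0 < w3.ord (algebraMap M1 M3 (algebraMap K M1 (1 + (a + a⁻¹) * x⁻¹)) - 1) := by
    rw [show algebraMap M1 M3 (algebraMap K M1 (1 + (a + a⁻¹) * x⁻¹)) - 1
        = algebraMap M1 M3 (algebraMap K M1 ((1 + (a + a⁻¹) * x⁻¹) - 1)) by
          rw [map_sub, map_sub, map_one, map_one],
      hext3, hext1]
    exact hu4K
  obtain ⟨w4, hext4, hdens4⟩ := stepA hq w3 hζ3 hnat3 hq3 hu4ord hα4 hadj4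
  have hζ4 : IsPrimitiveRoot (algebraMap M3 M4 (algebraMap M1 M3 (algebraMap K M1 ζ))) q :=
    hζ3.map_of_injective (algebraMap M3 M4).injective
  have ha4 : w4.ord (algebraMap M3 M4 (algebraMap M1 M3 (algebraMap K M1 a))) = 0 := by
    rw [hext4, ha3]
  have hP4 : ∀ z : M4,
      ¬ 0 < w4.ord (algebraMap M3 M4 (algebraMap M1 M3 (algebraMap K M1 a)) - z ^ q) :=
    transferP hq.pos w3 w4 hext4 hdens4 ha3 hP3
  -- final step: the norm argument
  have hy0 : y ≠ 0 := by
    intro h0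
    haveI := finiteDimensional_of_adjoin_root hq hα5 hadj5
    rw [h0, Algebra.norm_zero] at hNy
    exact hc0ne ((map_eq_zero _).mp ((map_eq_zero _).mp ((map_eq_zero _).mp hNy.symm)))
  obtain ⟨n, hn⟩ := stepB hq w4 hζ4 ha4 hP4 hα5 hadj5 y hy0
  have hnormval : w4.ord (Algebra.norm M4 y) = ((vb + q * vx : ℤ) : WithTop ℤ) := by
    rw [hNy, hext4, hext3, hext1, hc0ord]
  rw [hnormval] at hn
  have hint : vb + (q : ℤ) * vx = (q : ℤ) * n := by exact_mod_cast hn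
  obtain ⟨k, hk⟩ : (q : ℤ) ∣ vb := ⟨n - vx, by linarith⟩
  exact h1' ⟨k, by rw [hvb, hk]⟩

end Glue

/-- If `ord_𝔭 b < 0` and `ord_𝔭 b ≢ 0 mod q`, `a` is a unit at `𝔭`
whose residue is not a `q`-th power, and `ord_𝔭 x < ((q-1)/q)·ord_𝔭 b`, then the norm
equation `N_{L₄(a^{1/q})/L₄}(y) = b x^q + b^q` has no solution. -/
theorem statement17 (p q : ℕ) [Fact p.Prime] (hq : q.Prime) (hqp : q ≠ p)
    (K : Type) [Field K] [Algebra (RatFunc (ZMod p)) K]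
    [FiniteDimensional (RatFunc (ZMod p)) K]
    (ζ : K) (hζ : IsPrimitiveRoot ζ q)
    (a b x : K) (ha : a ≠ 0) (hb : b ≠ 0) (hx : x ≠ 0)
    (v : FFPrime K)
    (h1 : v.ord b < 0) (h1' : ¬ v.OrdDvd q b)
    (h2 : v.ord a = 0) (h2' : ¬ ∃ u : K, 0 < v.ord (a - u ^ q))
    (h3 : ((q : ℤ) : WithTop ℤ) * v.ord x < (((q : ℤ) - 1 : ℤ) : WithTop ℤ) * v.ord b) :
    NormTower4Unsolvable q K a b x :=
  statement17' p q hq hqp K ζ hζ a b x ha hb hx v h1 (fun h => h1' h) h2 h2' h3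
end
end
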